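/- arXiv:2108.09687 — 5 statements merged into one kernel-verified Lean document; each statement's English description precedes it below -/
import Mathlib

section
/- (Lemma 2.3.) For every integer n ≥ 1 and every (z₁, …, zₙ) ∈ ℂⁿ, the real Jacobian determinant of ψ at (z₁, …, zₙ) equals ∏_{1 ≤ j < k ≤ n} |z_j − z_k|². -/
open Complex Matrix Finset

noncomputable section

variable {n : ℕ}

def p2 : Matrix (Fin 2) (Fin 2) ℂ := !![1, I; 1, -I]

def Pm (n : ℕ) : Matrix (Fin n × Fin 2) (Fin n × Fin 2) ℂ :=
  fun a b => if a.1 = b.1 then p2 a.2 b.2 else 0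

lemma Pm_eq : Pm n = (Matrix.blockDiagonal (fun _ : Fin n => p2)).submatrix
    (Equiv.prodComm (Fin n) (Fin 2)) (Equiv.prodComm (Fin n) (Fin 2)) := by
  ext ⟨j, s⟩ ⟨k, t⟩
  simp [Pm, Matrix.blockDiagonal_apply, Matrix.submatrix_apply]

lemma det_Pm : (Pm n).det = (-2 * I) ^ n := by
  rw [Pm_eq, Matrix.det_submatrix_equiv_self, Matrix.det_blockDiagonal]
  have : p2.det = -2 * I := by simp [p2, Matrix.det_fin_two]; ring
  simp [this]

lemma det_Pm_ne_zero : (Pm n).det ≠ 0 := by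
  rw [det_Pm]
  apply pow_ne_zero
  simp [Complex.ext_iff]

def Qm (A : Matrix (Fin n) (Fin n) ℂ) : Matrix (Fin n × Fin 2) (Fin n × Fin 2) ℂ :=
  Matrix.blockDiagonal ![A, A.map (starRingEnd ℂ)]

def Mr (A : Matrix (Fin n) (Fin n) ℂ) : Matrix (Fin n × Fin 2) (Fin n × Fin 2) ℝ :=
  fun a b =>
    if a.2 = b.2 then (A a.1 b.1).re else if (a.2 : ℕ) = 0 then -(A a.1 b.1).im else (A a.1 b.1).im

lemma det_Qm (A : Matrix (Fin n) (Fin n) ℂ) :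
    (Qm A).det = Complex.normSq A.det := by
  rw [Qm, Matrix.det_blockDiagonal, Fin.prod_univ_two]
  simp only [Matrix.cons_val_zero, Matrix.cons_val_one, Matrix.head_cons]
  rw [show A.map ⇑(starRingEnd ℂ) = (starRingEnd ℂ).mapMatrix A from rfl, ← RingHom.map_det]
  exact (Complex.mul_conj _)

lemma similarity (A : Matrix (Fin n) (Fin n) ℂ) :
    Pm n * (Mr A).map (Complex.ofReal) = Qm A * Pm n := by
  ext ⟨j, s⟩ ⟨k, t⟩
  rw [Matrix.mul_apply, Matrix.mul_apply]
  simp only [Fintype.sum_prod_type]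
  simp only [Pm, Qm, Mr, Matrix.map_apply, Matrix.blockDiagonal_apply]
  rw [Finset.sum_eq_single j (by intro b _ hb; simp [Ne.symm hb]) (by simp)]
  rw [Finset.sum_eq_single k (by intro b _ hb; simp [hb]) (by simp)]
  simp only [if_pos rfl]
  fin_cases s <;> fin_cases t <;>
    simp [Fin.sum_univ_two, p2, Matrix.cons_val_zero, Matrix.cons_val_one, Complex.ext_iff] <;>
    ring_nf <;> simp

def Bc (n : ℕ) : Module.Basis (Fin n × Fin 2) ℝ (Fin n → ℂ) :=
  (Pi.basis fun _ : Fin n => Complex.basisOneI).reindex (Equiv.sigmaEquivProd (Fin n) (Fin 2))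

lemma toMatrix_restrict (A : Matrix (Fin n) (Fin n) ℂ) :
    LinearMap.toMatrix (Bc n) (Bc n) (LinearMap.restrictScalars ℝ A.mulVecLin) = Mr A := by
  ext ⟨j, s⟩ ⟨k, t⟩
  rw [LinearMap.toMatrix_apply]
  rw [Bc, Module.Basis.reindex_apply, Module.Basis.repr_reindex_apply]
  have hb : (Pi.basis fun _ : Fin n => Complex.basisOneI)
      ((Equiv.sigmaEquivProd (Fin n) (Fin 2)).symm (k, t)) = Pi.single k (![1, I] t) := by
    simp only [Pi.basis_apply, Complex.basisOneI]
    fin_cases t <;> simp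
  rw [hb]
  have : (LinearMap.restrictScalars ℝ A.mulVecLin) (Pi.single k (![1, I] t))
      = fun i => A i k * (![1, I] t) := by
    simp [Matrix.mulVecLin, Matrix.mulVec_single]
    funext i; simp [mul_comm]
  rw [this]
  rw [Pi.basis_repr]
  fin_cases s <;> fin_cases t <;> simp [Mr, Complex.coe_basisOneI_repr]

theorem det_restrictScalars_eq_normSq (A : Matrix (Fin n) (Fin n) ℂ) :
    LinearMap.det (LinearMap.restrictScalars ℝ A.mulVecLin) = Complex.normSq A.det := by
  have h1 : LinearMap.det (LinearMap.restrictScalars ℝ A.mulVecLin) = (Mr A).det := by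
    rw [← LinearMap.det_toMatrix (Bc n), toMatrix_restrict]
  have h2 : (Complex.ofReal (Mr A).det) = ((Mr A).map Complex.ofReal).det := by
    rw [show ((Mr A).map Complex.ofReal) = Complex.ofRealHom.mapMatrix (Mr A) from rfl,
      ← RingHom.map_det]
    rfl
  have h3 : ((Mr A).map Complex.ofReal).det = (Qm A).det := by
    have := congrArg Matrix.det (similarity A)
    rw [Matrix.det_mul, Matrix.det_mul] at this
    rw [mul_comm ((Qm A).det)] at this
    exact mul_left_cancel₀ det_Pm_ne_zero this
  have := h2.trans (h3.trans (det_Qm A))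
  rw [h1]
  exact_mod_cast this

/-- `Esf z j m` = elementary symmetric function of degree `m` in the variables away from `j`. -/
def Esf (z : Fin n → ℂ) (j : Fin n) (m : ℕ) : ℂ :=
  ∑ s ∈ (univ.erase j).powersetCard m, ∏ l ∈ s, z l

def Amat (z : Fin n → ℂ) : Matrix (Fin n) (Fin n) ℂ :=
  fun k j => (-1 : ℂ) ^ ((k : ℕ) + 1) * Esf z j (k : ℕ)

lemma swap_esymm (z v : Fin n → ℂ) (m : ℕ) :
    ∑ t ∈ univ.powersetCard (m + 1), ∑ l ∈ t, (∏ i ∈ t.erase l, z i) * v l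
      = ∑ j, Esf z j m * v j := by
  have h1 : ∀ t ∈ univ.powersetCard (m + 1),
      ∑ l ∈ t, (∏ i ∈ t.erase l, z i) * v l
        = ∑ l : Fin n, if l ∈ t then (∏ i ∈ t.erase l, z i) * v l else 0 := by
    intro t ht
    rw [Finset.sum_ite_mem, Finset.univ_inter]
  rw [Finset.sum_congr rfl h1, Finset.sum_comm]
  refine Finset.sum_congr rfl fun j _ => ?_
  rw [Finset.sum_ite, Finset.sum_const_zero, add_zero, Esf, Finset.sum_mul]
  refine Finset.sum_nbij' (fun t => t.erase j) (fun s => insert j s) ?_ ?_ ?_ ?_ ?_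
  · intro t ht
    simp only [Finset.mem_filter, Finset.mem_powersetCard] at ht ⊢
    exact ⟨Finset.erase_subset_erase _ ht.1.1,
      by simp [Finset.card_erase_of_mem ht.2, ht.1.2]⟩
  · intro s hs
    rw [Finset.mem_powersetCard] at hs
    have hj : j ∉ s := fun h => (Finset.mem_erase.mp (hs.1 h)).1 rfl
    simp only [Finset.mem_filter, Finset.mem_powersetCard]
    refine ⟨⟨Finset.subset_univ _, ?_⟩, Finset.mem_insert_self _ _⟩
    rw [Finset.card_insert_of_notMem hj, hs.2]
  · intro t ht
    simp only [Finset.mem_filter] at ht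
    exact Finset.insert_erase ht.2
  · intro s hs
    rw [Finset.mem_powersetCard] at hs
    exact Finset.erase_insert fun h => (Finset.mem_erase.mp (hs.1 h)).1 rfl
  · intro t _; rfl

theorem hasFDerivAt_psi (z : Fin n → ℂ) :
    HasFDerivAt (𝕜 := ℂ) (fun w : Fin n → ℂ => fun k : Fin n =>
        (-1 : ℂ) ^ ((k : ℕ) + 1) * (Finset.univ.val.map w).esymm ((k : ℕ) + 1))
      (LinearMap.toContinuousLinearMap (Amat z).mulVecLin) z := by
  have key : ∀ k : Fin n,
      HasFDerivAt (𝕜 := ℂ) (fun w : Fin n → ℂ =>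
          (-1 : ℂ) ^ ((k : ℕ) + 1) * (Finset.univ.val.map w).esymm ((k : ℕ) + 1))
        ((-1 : ℂ) ^ ((k : ℕ) + 1) • ∑ t ∈ univ.powersetCard ((k : ℕ) + 1),
          ∑ l ∈ t, (∏ i ∈ t.erase l, z i) • ContinuousLinearMap.proj l) z := by
    intro k
    have he : (fun w : Fin n → ℂ => (Finset.univ.val.map w).esymm ((k : ℕ) + 1))
        = fun w => ∑ t ∈ univ.powersetCard ((k : ℕ) + 1), ∏ l ∈ t, w l := by
      funext w
      exact Finset.esymm_map_val w univ _
    have h2 : HasFDerivAt (𝕜 := ℂ)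
        (fun w : Fin n → ℂ => ∑ t ∈ univ.powersetCard ((k : ℕ) + 1), ∏ l ∈ t, w l)
        (∑ t ∈ univ.powersetCard ((k : ℕ) + 1),
          ∑ l ∈ t, (∏ i ∈ t.erase l, z i) • ContinuousLinearMap.proj l) z :=
      HasFDerivAt.fun_sum fun t _ => hasFDerivAt_finset_prod
    have h3 := h2.const_mul ((-1 : ℂ) ^ ((k : ℕ) + 1))
    exact h3.congr_of_eventuallyEq (Filter.Eventually.of_forall fun w => by
      simp only []
      rw [Finset.esymm_map_val])
  have hpi := hasFDerivAt_pi.mpr key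
  refine hpi.congr_fderiv (Eq.symm ?_)
  apply ContinuousLinearMap.ext
  intro v
  funext k
  simp only [ContinuousLinearMap.pi_apply, LinearMap.coe_toContinuousLinearMap',
    Matrix.mulVecLin_apply, ContinuousLinearMap.smul_apply, ContinuousLinearMap.sum_apply,
    ContinuousLinearMap.smul_apply, ContinuousLinearMap.proj_apply, smul_eq_mul]
  rw [swap_esymm z v (k : ℕ)]
  simp only [Matrix.mulVec, dotProduct, Amat, Finset.mul_sum]
  exact Finset.sum_congr rfl fun j _ => by ring


lemma prod_sub_eq_sum (u : Finset (Fin n)) (z : Fin n → ℂ) (x : ℂ) :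
    ∏ l ∈ u, (x - z l)
      = ∑ i ∈ Finset.range (u.card + 1),
          (-1 : ℂ) ^ i * (∑ s ∈ u.powersetCard i, ∏ l ∈ s, z l) * x ^ (u.card - i) := by
  set p : Polynomial ℂ := ∏ l ∈ u, (Polynomial.X - Polynomial.C (z l)) with hp
  have hdeg : p.natDegree < u.card + 1 := by
    have := Polynomial.natDegree_prod_le u (fun l => Polynomial.X - Polynomial.C (z l))
    simp only [Polynomial.natDegree_X_sub_C, Finset.sum_const, smul_eq_mul, mul_one] at this
    rw [← hp] at this
    omega
  have hm : p = ((u.val.map z).map (fun t => Polynomial.X - Polynomial.C t)).prod := by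
    rw [Multiset.map_map]
    rfl
  have hcard : Multiset.card (u.val.map z) = u.card := by
    rw [Multiset.card_map]; rfl
  have hco : ∀ i, i ≤ u.card →
      p.coeff i = (-1 : ℂ) ^ (u.card - i) * ∑ s ∈ u.powersetCard (u.card - i), ∏ l ∈ s, z l := by
    intro i hi
    rw [hm, Multiset.prod_X_sub_C_coeff _ (by rw [hcard]; exact hi), hcard,
      Finset.esymm_map_val]
  have heval : ∏ l ∈ u, (x - z l) = p.eval x := by
    simp [hp, Polynomial.eval_prod]
  rw [heval, Polynomial.eval_eq_sum_range' hdeg x,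
    ← Finset.sum_range_reflect (fun i => (-1 : ℂ) ^ i *
      (∑ s ∈ u.powersetCard i, ∏ l ∈ s, z l) * x ^ (u.card - i)) (u.card + 1)]
  refine Finset.sum_congr rfl fun i hi => ?_
  rw [Finset.mem_range] at hi
  have hi' : i ≤ u.card := by omega
  rw [show u.card + 1 - 1 - i = u.card - i from by omega, hco i hi',
    Nat.sub_sub_self hi']

def Mmat (z : Fin n → ℂ) : Matrix (Fin n) (Fin n) ℂ :=
  fun i j => (-1 : ℂ) ^ (i : ℕ) * Esf z j (i : ℕ)

def Vmat (z : Fin n → ℂ) : Matrix (Fin n) (Fin n) ℂ :=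
  fun m i => z m ^ (n - 1 - (i : ℕ))

lemma VM_eq (z : Fin n → ℂ) (hn : 1 ≤ n) :
    Vmat z * Mmat z = Matrix.diagonal (fun j => ∏ l ∈ univ.erase j, (z j - z l)) := by
  ext m j
  rw [Matrix.mul_apply]
  have hcard : (univ.erase j).card = n - 1 := by
    rw [Finset.card_erase_of_mem (Finset.mem_univ j), Finset.card_univ, Fintype.card_fin]
  have key : ∑ i : Fin n, Vmat z m i * Mmat z i j = ∏ l ∈ univ.erase j, (z m - z l) := by
    rw [prod_sub_eq_sum (univ.erase j) z (z m), hcard,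
      show n - 1 + 1 = n from by omega,
      ← Fin.sum_univ_eq_sum_range (fun i =>
        (-1 : ℂ) ^ i * (∑ s ∈ (univ.erase j).powersetCard i, ∏ l ∈ s, z l) * z m ^ (n - 1 - i)) n]
    refine Finset.sum_congr rfl fun i _ => ?_
    rw [Vmat, Mmat, Esf]
    ring
  rw [key]
  rcases eq_or_ne m j with rfl | hmj
  · rw [Matrix.diagonal_apply_eq]
  · rw [Matrix.diagonal_apply_ne _ hmj]
    exact Finset.prod_eq_zero (Finset.mem_erase.mpr ⟨hmj, Finset.mem_univ m⟩) (sub_self _)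

lemma prod_lt_pairs (F : Fin n → Fin n → ℝ) :
    ∏ p ∈ univ.filter (fun p : Fin n × Fin n => p.1 < p.2), F p.1 p.2
      = ∏ i, ∏ j ∈ Finset.Ioi i, F i j := by
  rw [Finset.prod_filter, Fintype.prod_prod_type]
  refine Finset.prod_congr rfl fun i _ => ?_
  rw [show Finset.Ioi i = Finset.filter (fun j => i < j) Finset.univ from by ext x; simp,
    Finset.prod_filter]

lemma prod_ne_pairs (F : Fin n → Fin n → ℝ) :
    ∏ p ∈ univ.filter (fun p : Fin n × Fin n => p.1 ≠ p.2), F p.1 p.2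
      = ∏ j, ∏ l ∈ univ.erase j, F j l := by
  rw [Finset.prod_filter, Fintype.prod_prod_type]
  refine Finset.prod_congr rfl fun j _ => ?_
  rw [show Finset.univ.erase j = Finset.filter (fun l => j ≠ l) Finset.univ from by
    ext x; simp [ne_comm], Finset.prod_filter]

lemma pairs_split (F : Fin n → Fin n → ℝ) (hF : ∀ a b, F a b = F b a) :
    ∏ p ∈ univ.filter (fun p : Fin n × Fin n => p.1 ≠ p.2), F p.1 p.2
      = (∏ p ∈ univ.filter (fun p : Fin n × Fin n => p.1 < p.2), F p.1 p.2) ^ 2 := by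
  have hunion : univ.filter (fun p : Fin n × Fin n => p.1 ≠ p.2)
      = univ.filter (fun p => p.1 < p.2) ∪ univ.filter (fun p => p.2 < p.1) := by
    ext p
    simp only [Finset.mem_union, Finset.mem_filter, Finset.mem_univ, true_and]
    exact ne_iff_lt_or_gt
  rw [hunion, Finset.prod_union (by
    rw [Finset.disjoint_left]
    intro p hp hq
    rw [Finset.mem_filter] at hp hq
    exact absurd hq.2 (not_lt.mpr hp.2.le))]
  have hswap : ∏ p ∈ univ.filter (fun p : Fin n × Fin n => p.2 < p.1), F p.1 p.2
      = ∏ p ∈ univ.filter (fun p : Fin n × Fin n => p.1 < p.2), F p.1 p.2 := by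
    refine Finset.prod_nbij' Prod.swap Prod.swap ?_ ?_ ?_ ?_ ?_
    · intro p hp; rw [Finset.mem_filter] at hp ⊢; exact ⟨Finset.mem_univ _, hp.2⟩
    · intro p hp; rw [Finset.mem_filter] at hp ⊢; exact ⟨Finset.mem_univ _, hp.2⟩
    · intro p _; rfl
    · intro p _; rfl
    · intro p _; exact hF p.1 p.2
  rw [hswap, sq]

lemma normSq_det_Vmat (z : Fin n → ℂ) :
    normSq (Vmat z).det
      = ∏ p ∈ univ.filter (fun p : Fin n × Fin n => p.1 < p.2), normSq (z p.1 - z p.2) := by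
  have hV : Vmat z = (Matrix.vandermonde z).submatrix id (⇑(Fin.revPerm (n := n))) := by
    ext m i
    simp only [Vmat, Matrix.submatrix_apply, Matrix.vandermonde, id_eq, Fin.revPerm_apply,
      Matrix.of_apply]
    congr 1
    rw [Fin.val_rev]
    omega
  rw [hV, Matrix.det_permute', _root_.map_mul, Matrix.det_vandermonde]
  have hsign : normSq ((Equiv.Perm.sign (Fin.revPerm (n := n)) : ℤ) : ℂ) = 1 := by
    rcases Int.units_eq_one_or (Equiv.Perm.sign (Fin.revPerm (n := n))) with h | h <;>
      rw [h] <;> simp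
  rw [hsign, one_mul, _root_.map_prod, prod_lt_pairs (fun i j => normSq (z i - z j))]
  refine Finset.prod_congr rfl fun i _ => ?_
  rw [_root_.map_prod]
  refine Finset.prod_congr rfl fun j _ => ?_
  rw [← neg_sub, normSq_neg]

lemma Esf_congr {z : Fin n → ℂ} {j k : Fin n} (hjk : j ≠ k) (hz : z j = z k) (m : ℕ) :
    Esf z j m = Esf z k m := by
  rw [Esf, Esf, ← Finset.esymm_map_val, ← Finset.esymm_map_val]
  congr 1
  have hj : Multiset.map z (univ.erase j).val = (Multiset.map z univ.val).erase (z j) := by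
    rw [Finset.erase_val, ← Multiset.map_erase_of_mem _ _ (Finset.mem_univ_val j)]
  have hk : Multiset.map z (univ.erase k).val = (Multiset.map z univ.val).erase (z k) := by
    rw [Finset.erase_val, ← Multiset.map_erase_of_mem _ _ (Finset.mem_univ_val k)]
  rw [hj, hk, hz]

lemma normSq_det_Mmat (z : Fin n → ℂ) (hn : 1 ≤ n) :
    normSq (Mmat z).det
      = ∏ p ∈ univ.filter (fun p : Fin n × Fin n => p.1 < p.2), normSq (z p.1 - z p.2) := by
  by_cases hinj : Function.Injective z
  · have hVM := congrArg Matrix.det (VM_eq z hn)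
    rw [Matrix.det_mul, Matrix.det_diagonal] at hVM
    have hT := congrArg normSq hVM
    rw [_root_.map_mul, _root_.map_prod, normSq_det_Vmat] at hT
    set T := ∏ p ∈ univ.filter (fun p : Fin n × Fin n => p.1 < p.2), normSq (z p.1 - z p.2)
      with hTdef
    have hd : ∏ j, normSq (∏ l ∈ univ.erase j, (z j - z l)) = T ^ 2 := by
      have : ∀ j : Fin n, normSq (∏ l ∈ univ.erase j, (z j - z l))
          = ∏ l ∈ univ.erase j, normSq (z j - z l) := fun j => _root_.map_prod _ _ _
      rw [Finset.prod_congr rfl fun j _ => this j,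
        ← prod_ne_pairs (fun j l => normSq (z j - z l))]
      rw [pairs_split (fun j l => normSq (z j - z l))
        (fun a b => by beta_reduce; rw [← neg_sub (z a) (z b), normSq_neg])]
    rw [hd] at hT
    have hTne : T ≠ 0 := by
      rw [hTdef]
      refine Finset.prod_ne_zero_iff.mpr fun p hp => ?_
      rw [Finset.mem_filter] at hp
      have : z p.1 ≠ z p.2 := fun h => absurd (hinj h) (ne_of_lt hp.2)
      simpa [Complex.normSq_eq_zero, sub_eq_zero] using this
    rw [sq] at hT
    exact mul_left_cancel₀ hTne hT
  · rw [Function.not_injective_iff] at hinj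
    obtain ⟨j, k, hz, hjk⟩ := hinj
    have hdet : (Mmat z).det = 0 := by
      apply Matrix.det_zero_of_column_eq hjk
      intro i
      rw [Mmat]
      rw [Esf_congr hjk hz]
      rfl
    rw [hdet, map_zero]
    symm
    rcases hjk.lt_or_gt with h | h
    · exact Finset.prod_eq_zero (Finset.mem_filter.mpr ⟨Finset.mem_univ (j, k), h⟩)
        (by simp [Complex.normSq_eq_zero, sub_eq_zero, hz])
    · exact Finset.prod_eq_zero (Finset.mem_filter.mpr ⟨Finset.mem_univ (k, j), h⟩)
        (by simp [Complex.normSq_eq_zero, sub_eq_zero, hz.symm])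

lemma normSq_det_Amat (z : Fin n → ℂ) (hn : 1 ≤ n) :
    Complex.normSq (Amat z).det
      = ∏ p ∈ univ.filter (fun p : Fin n × Fin n => p.1 < p.2),
          Complex.normSq (z p.1 - z p.2) := by
  have hA : Amat z = -(Mmat z) := by
    ext k j
    simp only [Amat, Mmat, Matrix.neg_apply]
    rw [pow_succ]
    ring
  rw [hA, Matrix.det_neg, _root_.map_mul, map_pow]
  simp [normSq_det_Mmat z hn]

end

open Finset

/-- **Lemma 2.3.** The real Jacobian determinant of the map
`ψ : ℂⁿ → ℂⁿ`, `ψ(z) = (−e₁(z), e₂(z), …, (−1)ⁿ eₙ(z))` (roots to non-leading coefficients of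
the monic polynomial `∏ (X − zⱼ)`) equals `∏_{j<k} |z_j − z_k|²`. -/
theorem real_jacobian_roots_to_coeffs (n : ℕ) (hn : 1 ≤ n) (z : Fin n → ℂ) :
    LinearMap.det
        ((fderiv ℝ (fun w : Fin n → ℂ => fun k : Fin n =>
            (-1 : ℂ) ^ ((k : ℕ) + 1) * (Finset.univ.val.map w).esymm ((k : ℕ) + 1)) z).toLinearMap)
      = ∏ p ∈ Finset.univ.filter (fun p : Fin n × Fin n => p.1 < p.2), ‖z p.1 - z p.2‖ ^ 2 := by
  have hd := hasFDerivAt_psi z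
  have hr := hd.restrictScalars ℝ
  rw [hr.fderiv]
  rw [show ((ContinuousLinearMap.restrictScalars ℝ
        (LinearMap.toContinuousLinearMap (Amat z).mulVecLin)).toLinearMap)
      = LinearMap.restrictScalars ℝ (Amat z).mulVecLin from by ext v; simp]
  rw [det_restrictScalars_eq_normSq, normSq_det_Amat z hn]
  exact Finset.prod_congr rfl fun p _ => by
    rw [Complex.sq_norm]
end

section
/- For every v ∈ ℂ and every ϱ > 0, the double integral ∫_{ℂ^{n+1}} ( ∫_0^{2π} |Φ_η′(ϱe^{iθ}) / (Φ_η(ϱe^{iθ}) − v)| · ϱ dθ ) dγ(η) is finite; in particular the function (η, θ) ↦ Φ_η′(ϱe^{iθ})/(Φ_η(ϱe^{iθ}) − v) is integrable with respect to the product of γ and arclength measure on the circle of radius ϱ. -/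
open MeasureTheory Polynomial Filter Metric
open ComplexConjugate
open scoped Classical

/-- The standard complex Gaussian probability measure on `ℂ^{n+1}`, with density
`π^{-(n+1)} exp(-∑ |η_j|²)` with respect to Lebesgue measure. -/
noncomputable def gaussianC (n : ℕ) : Measure (Fin (n + 1) → ℂ) :=
  volume.withDensity fun η =>
    ENNReal.ofReal ((Real.pi ^ (n + 1))⁻¹ * Real.exp (-∑ j, ‖η j‖ ^ 2))

/-- The random polynomial `Φ_η = ∑_{j=0}^n η_j φ_j`. -/
noncomputable def Phi (n : ℕ) (φ : ℕ → Polynomial ℂ) (η : Fin (n + 1) → ℂ) : Polynomial ℂ :=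
  ∑ j : Fin (n + 1), Polynomial.C (η j) * φ (j : ℕ)

/-- The number of zeros of `Φ_η − v` lying in `Θ`, counted with multiplicity. -/
noncomputable def Nzeros (n : ℕ) (φ : ℕ → Polynomial ℂ) (Θ : Set ℂ) (v : ℂ)
    (η : Fin (n + 1) → ℂ) : ℕ :=
  Multiset.card ((Phi n φ η - Polynomial.C v).roots.filter (· ∈ Θ))

/-- Diagonal Christoffel–Darboux kernel `K_n(z,z) = ∑_{j=0}^n |φ_j(z)|²`. -/
noncomputable def Kd (φ : ℕ → Polynomial ℂ) (n : ℕ) (z : ℂ) : ℝ :=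
  ∑ j : Fin (n + 1), ‖(φ (j : ℕ)).eval z‖ ^ 2

/-- `K_n^{(0,1)}(z,z) = ∑_{j=0}^n φ_j(z) conj(φ_j'(z))`. -/
noncomputable def K01 (φ : ℕ → Polynomial ℂ) (n : ℕ) (z : ℂ) : ℂ :=
  ∑ j : Fin (n + 1), (φ (j : ℕ)).eval z * conj ((Polynomial.derivative (φ (j : ℕ))).eval z)

/-- `K_n^{(1,1)}(z,z) = ∑_{j=0}^n |φ_j'(z)|²`. -/
noncomputable def K11 (φ : ℕ → Polynomial ℂ) (n : ℕ) (z : ℂ) : ℝ :=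
  ∑ j : Fin (n + 1), ‖(Polynomial.derivative (φ (j : ℕ))).eval z‖ ^ 2

/-- The density `ρ_{n,v}(z)` of Theorem 1.3. -/
noncomputable def rhoDens (φ : ℕ → Polynomial ℂ) (n : ℕ) (v z : ℂ) : ℝ :=
  (1 / Real.pi) *
    (K11 φ n z / Kd φ n z -
      (‖K01 φ n z‖ ^ 2 / (Kd φ n z) ^ 2) * (1 - ‖v‖ ^ 2 / Kd φ n z)) *
    Real.exp (-‖v‖ ^ 2 / Kd φ n z)

open scoped ENNReal

section AuxRIOC

lemma ofReal_div_le' {x t : ℝ} (hx : 0 ≤ x) :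
    ENNReal.ofReal (x / t) ≤ ENNReal.ofReal x * (ENNReal.ofReal t)⁻¹ := by
  rcases le_or_gt t 0 with h | h
  · simp [ENNReal.ofReal_eq_zero.2 (div_nonpos_of_nonneg_of_nonpos hx h)]
  · rw [ENNReal.ofReal_div_of_pos h, ENNReal.div_eq_inv_mul, mul_comm]

lemma integrable_gauss_complex {b : ℝ} (hb : 0 < b) :
    Integrable (fun w : ℂ => Real.exp (-b * ‖w‖ ^ 2)) := by
  have h2 : Integrable (fun p : ℝ × ℝ => Real.exp (-b * p.1 ^ 2) * Real.exp (-b * p.2 ^ 2))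
      ((volume : Measure ℝ).prod volume) :=
    (integrable_exp_neg_mul_sq hb).mul_prod (integrable_exp_neg_mul_sq hb)
  rw [← Measure.volume_eq_prod] at h2
  have := (Complex.volume_preserving_equiv_real_prod.integrable_comp_emb
    Complex.measurableEquivRealProd.measurableEmbedding).2 h2
  refine this.congr (Filter.Eventually.of_forall fun w => ?_)
  simp only [Function.comp_apply, Complex.measurableEquivRealProd_apply]
  rw [← Real.exp_add]
  have hw : ‖w‖ ^ 2 = w.re ^ 2 + w.im ^ 2 := by
    rw [Complex.sq_norm, Complex.normSq_apply]; ring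
  rw [hw]; ring_nf

lemma lint_gauss_complex {b : ℝ} (hb : 0 < b) :
    ∫⁻ w : ℂ, ENNReal.ofReal (Real.exp (-b * ‖w‖ ^ 2)) < ⊤ :=
  (integrable_gauss_complex hb).lintegral_lt_top

lemma dyadic_aux {r : ℝ} (hr : 0 < r) (hr1 : r < 1) :
    ∃ k : ℕ, (2 : ℝ)⁻¹ ^ (k + 1) ≤ r ∧ r < (2 : ℝ)⁻¹ ^ k := by
  have hex : ∃ n : ℕ, (2 : ℝ)⁻¹ ^ n ≤ r := by
    obtain ⟨n, hn⟩ := exists_pow_lt_of_lt_one hr (by norm_num : (2:ℝ)⁻¹ < 1)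
    exact ⟨n, hn.le⟩
  rcases hk : Nat.find hex with _ | m
  · exfalso
    have := Nat.find_spec hex
    rw [hk] at this
    simp at this
    linarith
  · refine ⟨m, ?_, ?_⟩
    · have := Nat.find_spec hex; rwa [hk] at this
    · have := Nat.find_min hex (m := m) (by omega)
      linarith [not_le.1 this]

lemma ball_inv_lt : ∫⁻ u in ball (0:ℂ) 1, (ENNReal.ofReal ‖u‖)⁻¹ < ⊤ := by
  set V := volume (ball (0:ℂ) 1) with hV
  have hVlt : V < ⊤ := measure_ball_lt_top
  set S : ℕ → Set ℂ := fun k => ball (0:ℂ) ((2:ℝ)⁻¹ ^ k) \ ball (0:ℂ) ((2:ℝ)⁻¹ ^ (k + 1)) with hS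
  have hcover : ball (0:ℂ) 1 ⊆ {(0:ℂ)} ∪ ⋃ k, S k := by
    intro u hu
    rcases eq_or_ne u 0 with h | h
    · exact Or.inl (by simp [h])
    · have hu0 : 0 < ‖u‖ := norm_pos_iff.2 h
      have hu1 : ‖u‖ < 1 := by simpa [mem_ball, dist_eq_norm] using hu
      obtain ⟨k, h1, h2⟩ := dyadic_aux hu0 hu1
      refine Or.inr (Set.mem_iUnion.2 ⟨k, ?_, ?_⟩)
      · simpa [mem_ball, dist_eq_norm] using h2
      · simp only [mem_ball, dist_eq_norm, sub_zero, not_lt]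
        simpa using h1
  calc ∫⁻ u in ball (0:ℂ) 1, (ENNReal.ofReal ‖u‖)⁻¹
      ≤ ∫⁻ u in {(0:ℂ)} ∪ ⋃ k, S k, (ENNReal.ofReal ‖u‖)⁻¹ :=
        lintegral_mono_set hcover
    _ ≤ (∫⁻ u in {(0:ℂ)}, (ENNReal.ofReal ‖u‖)⁻¹) +
          ∫⁻ u in ⋃ k, S k, (ENNReal.ofReal ‖u‖)⁻¹ := lintegral_union_le _ _ _
    _ ≤ 0 + ∑' k, ∫⁻ u in S k, (ENNReal.ofReal ‖u‖)⁻¹ := by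
        gcongr
        · rw [setLIntegral_measure_zero _ _ (measure_singleton 0)]
        · exact lintegral_iUnion_le _ _
    _ ≤ ∑' k, ENNReal.ofReal (2 * (2:ℝ)⁻¹ ^ k) * V := by
        rw [zero_add]
        refine ENNReal.tsum_le_tsum fun k => ?_
        have hmeas : MeasurableSet (S k) := measurableSet_ball.diff measurableSet_ball
        have hb : ∀ u ∈ S k, (ENNReal.ofReal ‖u‖)⁻¹ ≤ ENNReal.ofReal ((2:ℝ)⁻¹ ^ (k+1))⁻¹ := by
          intro u hu
          have h1 : (2:ℝ)⁻¹ ^ (k+1) ≤ ‖u‖ := by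
            have := hu.2
            simpa [mem_ball, dist_eq_norm, not_lt] using this
          rw [← ENNReal.ofReal_inv_of_pos (lt_of_lt_of_le (by positivity) h1)]
          exact ENNReal.ofReal_le_ofReal (by
            apply inv_anti₀ (by positivity) h1)
        calc ∫⁻ u in S k, (ENNReal.ofReal ‖u‖)⁻¹
            ≤ ∫⁻ _ in S k, ENNReal.ofReal ((2:ℝ)⁻¹ ^ (k+1))⁻¹ := setLIntegral_mono' hmeas hb
          _ = ENNReal.ofReal ((2:ℝ)⁻¹ ^ (k+1))⁻¹ * volume (S k) := by
              rw [setLIntegral_const]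
          _ ≤ ENNReal.ofReal ((2:ℝ)⁻¹ ^ (k+1))⁻¹ * volume (ball (0:ℂ) ((2:ℝ)⁻¹ ^ k)) := by
              gcongr
              exact Set.diff_subset
          _ = ENNReal.ofReal ((2:ℝ)⁻¹ ^ (k+1))⁻¹ *
                (ENNReal.ofReal (((2:ℝ)⁻¹ ^ k) ^ Module.finrank ℝ ℂ) * V) := by
              rw [Measure.addHaar_ball volume 0 (by positivity)]
          _ = ENNReal.ofReal (2 * (2:ℝ)⁻¹ ^ k) * V := by
              rw [← mul_assoc, ← ENNReal.ofReal_mul (by positivity)]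
              congr 2
              rw [Complex.finrank_real_complex]
              rw [pow_succ]
              field_simp
    _ < ⊤ := by
        have : ∀ k : ℕ, ENNReal.ofReal (2 * (2:ℝ)⁻¹ ^ k) * V = 2 * (2:ℝ≥0∞)⁻¹ ^ k * V := by
          intro k
          congr 1
          rw [ENNReal.ofReal_mul (by norm_num), ENNReal.ofReal_pow (by norm_num)]
          norm_num
          congr 1
          rw [one_div, ENNReal.ofReal_inv_of_pos (by norm_num), ENNReal.ofReal_ofNat]
        simp_rw [this]
        rw [ENNReal.tsum_mul_right, ENNReal.tsum_mul_left, ENNReal.tsum_geometric]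
        refine ENNReal.mul_lt_top (ENNReal.mul_lt_top (by norm_num) ?_) hVlt
        · rw [ENNReal.one_sub_inv_two, inv_inv]
          exact ENNReal.ofNat_lt_top

lemma one_dim_bound : ∃ K : ℝ≥0∞, K ≠ ⊤ ∧ ∀ d : ℂ,
    ∫⁻ w : ℂ, (ENNReal.ofReal ‖w - d‖)⁻¹ * ENNReal.ofReal (Real.exp (-‖w‖ ^ 2)) ≤ K := by
  refine ⟨(∫⁻ u in ball (0:ℂ) 1, (ENNReal.ofReal ‖u‖)⁻¹) +
    ∫⁻ w : ℂ, ENNReal.ofReal (Real.exp (-1 * ‖w‖ ^ 2)), ?_, fun d => ?_⟩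
  · exact ENNReal.add_ne_top.2 ⟨ball_inv_lt.ne, (lint_gauss_complex one_pos).ne⟩
  · rw [← lintegral_add_compl
      (fun w => (ENNReal.ofReal ‖w - d‖)⁻¹ * ENNReal.ofReal (Real.exp (-‖w‖ ^ 2)))
      (measurableSet_ball (x := d) (ε := 1))]
    refine add_le_add ?_ ?_
    · -- ball part
      calc ∫⁻ w in ball d 1, (ENNReal.ofReal ‖w - d‖)⁻¹ * ENNReal.ofReal (Real.exp (-‖w‖ ^ 2))
          ≤ ∫⁻ w in ball d 1, (ENNReal.ofReal ‖w - d‖)⁻¹ := by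
            refine setLIntegral_mono' measurableSet_ball fun w _ => ?_
            nth_rewrite 2 [← mul_one ((ENNReal.ofReal ‖w - d‖)⁻¹)]
            gcongr
            exact ENNReal.ofReal_le_one.2 (Real.exp_le_one_iff.2 (neg_nonpos.2 (by positivity)))
        _ = ∫⁻ u in ball (0:ℂ) 1, (ENNReal.ofReal ‖u‖)⁻¹ := by
            have hmp : MeasurePreserving (fun w : ℂ => w + d) volume volume :=
              measurePreserving_add_right volume d
            have hemb : MeasurableEmbedding (fun w : ℂ => w + d) :=
              (MeasurableEquiv.addRight d).measurableEmbedding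
            have hpre : (fun w : ℂ => w + d) ⁻¹' ball d 1 = ball (0:ℂ) 1 := by
              ext x
              simp [mem_ball, dist_eq_norm]
            have heq := hmp.setLIntegral_comp_preimage_emb hemb
              (fun u => (ENNReal.ofReal ‖u - d‖)⁻¹) (ball d 1)
            rw [hpre] at heq
            rw [← heq]
            simp
    · -- complement part
      calc ∫⁻ w in (ball d 1)ᶜ, (ENNReal.ofReal ‖w - d‖)⁻¹ * ENNReal.ofReal (Real.exp (-‖w‖ ^ 2))
          ≤ ∫⁻ w in (ball d 1)ᶜ, ENNReal.ofReal (Real.exp (-1 * ‖w‖ ^ 2)) := by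
            refine setLIntegral_mono' measurableSet_ball.compl fun w hw => ?_
            have h1 : (1:ℝ) ≤ ‖w - d‖ := by
              simpa [mem_ball, dist_eq_norm, not_lt] using hw
            calc (ENNReal.ofReal ‖w - d‖)⁻¹ * ENNReal.ofReal (Real.exp (-‖w‖ ^ 2))
                ≤ 1 * ENNReal.ofReal (Real.exp (-‖w‖ ^ 2)) := by
                  gcongr
                  rw [ENNReal.inv_le_one]
                  exact ENNReal.one_le_ofReal.2 h1
              _ = ENNReal.ofReal (Real.exp (-1 * ‖w‖ ^ 2)) := by rw [one_mul, neg_one_mul]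
        _ ≤ ∫⁻ w : ℂ, ENNReal.ofReal (Real.exp (-1 * ‖w‖ ^ 2)) :=
            setLIntegral_le_lintegral _ _

lemma tail_int (m : ℕ) :
    ∫⁻ y : Fin m → ℂ, ENNReal.ofReal ((∑ k, ‖y k‖) * Real.exp (-∑ k, ‖y k‖ ^ 2)) < ⊤ := by
  have hint : Integrable (fun y : Fin m → ℂ => ∏ k, Real.exp (-2⁻¹ * ‖y k‖ ^ 2)) volume :=
    Integrable.fintype_prod (f := fun _ w => Real.exp (-2⁻¹ * ‖w‖ ^ 2))
      (fun _ => integrable_gauss_complex (by norm_num))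
  have hbnd : ∀ y : Fin m → ℂ,
      (∑ k, ‖y k‖) * Real.exp (-∑ k, ‖y k‖ ^ 2)
        ≤ (2 * m + 2) * ∏ k, Real.exp (-2⁻¹ * ‖y k‖ ^ 2) := by
    intro y
    set T := ∑ k, ‖y k‖ ^ 2 with hT
    have hT0 : 0 ≤ T := Finset.sum_nonneg fun k _ => by positivity
    have h1 : (∑ k, ‖y k‖) ≤ m + T := by
      calc (∑ k, ‖y k‖) ≤ ∑ k, (1 + ‖y k‖ ^ 2) :=
            Finset.sum_le_sum fun k _ => by nlinarith [norm_nonneg (y k)]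
        _ = m + T := by rw [Finset.sum_add_distrib]; simp [hT]
    have h2 : Real.exp (-T) = Real.exp (-(T/2)) * Real.exp (-(T/2)) := by
      rw [← Real.exp_add]; ring_nf
    have h3 : (m + T) * Real.exp (-(T/2)) ≤ 2 * m + 2 := by
      have he : 1 + T/2 ≤ Real.exp (T/2) := by
        have := Real.add_one_le_exp (T/2); linarith
      have hgt : Real.exp (-(T/2)) = (Real.exp (T/2))⁻¹ := by
        rw [← Real.exp_neg]
      rw [hgt]
      rw [← div_eq_mul_inv, div_le_iff₀ (Real.exp_pos _)]
      calc (m:ℝ) + T ≤ (2*m+2) * (1 + T/2) := by nlinarith [Nat.cast_nonneg (α := ℝ) m]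
        _ ≤ (2*m+2) * Real.exp (T/2) := by nlinarith [Nat.cast_nonneg (α := ℝ) m]
    have h4 : ∏ k, Real.exp (-2⁻¹ * ‖y k‖ ^ 2) = Real.exp (-(T/2)) := by
      rw [← Real.exp_sum]
      congr 1
      rw [hT, Finset.sum_div, ← Finset.sum_neg_distrib]
      congr 1; ext k; ring
    calc (∑ k, ‖y k‖) * Real.exp (-T)
        ≤ (m + T) * Real.exp (-T) := by
          apply mul_le_mul_of_nonneg_right h1 (Real.exp_pos _).le
      _ = ((m + T) * Real.exp (-(T/2))) * Real.exp (-(T/2)) := by rw [h2]; ring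
      _ ≤ (2*m+2) * Real.exp (-(T/2)) := by
          apply mul_le_mul_of_nonneg_right h3 (Real.exp_pos _).le
      _ = (2*m+2) * ∏ k, Real.exp (-2⁻¹ * ‖y k‖ ^ 2) := by rw [h4]
  calc ∫⁻ y : Fin m → ℂ, ENNReal.ofReal ((∑ k, ‖y k‖) * Real.exp (-∑ k, ‖y k‖ ^ 2))
      ≤ ∫⁻ y : Fin m → ℂ, ENNReal.ofReal ((2 * m + 2) * ∏ k, Real.exp (-2⁻¹ * ‖y k‖ ^ 2)) :=
        lintegral_mono fun y => ENNReal.ofReal_le_ofReal (hbnd y)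
    _ = ENNReal.ofReal (2 * m + 2) *
          ∫⁻ y : Fin m → ℂ, ENNReal.ofReal (∏ k, Real.exp (-2⁻¹ * ‖y k‖ ^ 2)) := by
        rw [← lintegral_const_mul' _ _ ENNReal.ofReal_ne_top]
        congr 1; ext y
        rw [← ENNReal.ofReal_mul (by positivity)]
    _ < ⊤ := ENNReal.mul_lt_top ENNReal.ofReal_lt_top hint.lintegral_lt_top

lemma core (n : ℕ) (v : ℂ) (Cb : ℝ) :
    ∃ C : ℝ≥0∞, C ≠ ⊤ ∧ ∀ (a b : Fin (n+1) → ℂ), a 0 = 1 → b 0 = 0 →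
      (∀ j, ‖b j‖ ≤ Cb) →
      ∫⁻ η, ENNReal.ofReal ‖(∑ j, η j * b j) / ((∑ j, η j * a j) - v)‖ ∂(gaussianC n) ≤ C := by
  obtain ⟨K, hKne, hK⟩ := one_dim_bound
  set cπ : ℝ := (Real.pi ^ (n+1))⁻¹ with hcπ
  have hcπ0 : 0 ≤ cπ := by positivity
  set T : ℝ≥0∞ := ∫⁻ y : Fin n → ℂ, ENNReal.ofReal ((∑ k, ‖y k‖) * Real.exp (-∑ k, ‖y k‖ ^ 2))
    with hT
  refine ⟨ENNReal.ofReal cπ * ENNReal.ofReal Cb * K * T, ?_, ?_⟩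
  · exact (ENNReal.mul_lt_top (ENNReal.mul_lt_top
      (ENNReal.mul_lt_top ENNReal.ofReal_lt_top ENNReal.ofReal_lt_top) hKne.lt_top)
      (tail_int n)).ne
  intro a b ha hb0 hCb
  have hCb0 : 0 ≤ Cb := le_trans (norm_nonneg (b 0)) (hCb 0)
  set g : (Fin (n+1) → ℂ) → ℝ≥0∞ :=
    fun η => ENNReal.ofReal (cπ * Real.exp (-∑ j, ‖η j‖ ^ 2)) with hgdef
  have hg : Measurable g := by
    apply ENNReal.measurable_ofReal.comp
    apply Measurable.const_mul
    exact (Real.measurable_exp.comp (Finset.measurable_sum Finset.univ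
      (fun j _ => ((measurable_pi_apply j).norm.pow_const 2))).neg)
  set f : (Fin (n+1) → ℂ) → ℝ≥0∞ :=
    fun η => ENNReal.ofReal ‖(∑ j, η j * b j) / ((∑ j, η j * a j) - v)‖ with hfdef
  have hnum : Measurable fun η : Fin (n+1) → ℂ => ∑ j, η j * b j :=
    Finset.measurable_sum Finset.univ (fun j _ => by fun_prop)
  have hden : Measurable fun η : Fin (n+1) → ℂ => (∑ j, η j * a j) - v :=
    (Finset.measurable_sum Finset.univ
      (fun j _ => by fun_prop)).sub_const v
  have hf : Measurable f :=
    ENNReal.measurable_ofReal.comp (hnum.div hden).norm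
  have step1 : ∫⁻ η, f η ∂(gaussianC n) = ∫⁻ η, g η * f η := by
    rw [gaussianC, lintegral_withDensity_eq_lintegral_mul volume hg hf]
    rfl
  rw [step1]
  -- change of variables
  have mp := measurePreserving_piFinSuccAbove (fun _ : Fin (n+1) => (volume : Measure ℂ)) 0
  have hsymm : ∀ (w : ℂ) (y : Fin n → ℂ),
      (MeasurableEquiv.piFinSuccAbove (fun _ : Fin (n+1) => ℂ) 0).symm (w, y) = (Fin.cons w y : Fin (n+1) → ℂ) := by
    intro w y
    simp [MeasurableEquiv.piFinSuccAbove_symm_apply, Fin.insertNthEquiv, Fin.insertNth_zero']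
  have hgf : Measurable fun q : ℂ × (Fin n → ℂ) =>
      g ((MeasurableEquiv.piFinSuccAbove (fun _ : Fin (n+1) => ℂ) 0).symm q) *
      f ((MeasurableEquiv.piFinSuccAbove (fun _ : Fin (n+1) => ℂ) 0).symm q) :=
    ((hg.comp (MeasurableEquiv.piFinSuccAbove (fun _ : Fin (n+1) => ℂ) 0).symm.measurable).mul
      (hf.comp (MeasurableEquiv.piFinSuccAbove (fun _ : Fin (n+1) => ℂ) 0).symm.measurable))
  have step2 : ∫⁻ η, g η * f η =
      ∫⁻ q : ℂ × (Fin n → ℂ), g ((Fin.cons q.1 q.2 : Fin (n+1) → ℂ)) * f ((Fin.cons q.1 q.2 : Fin (n+1) → ℂ))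
        ∂((volume : Measure ℂ).prod (volume : Measure (Fin n → ℂ))) := by
    have h := mp.lintegral_comp (f := fun q : ℂ × (Fin n → ℂ) =>
      g ((MeasurableEquiv.piFinSuccAbove (fun _ : Fin (n+1) => ℂ) 0).symm q) *
      f ((MeasurableEquiv.piFinSuccAbove (fun _ : Fin (n+1) => ℂ) 0).symm q)) hgf
    simp only [MeasurableEquiv.symm_apply_apply] at h
    rw [← volume_pi, ← volume_pi] at h
    exact h.trans (lintegral_congr fun q => by rw [hsymm q.1 q.2])
  rw [step2]
  -- Tonelli
  have hgf' : Measurable fun q : ℂ × (Fin n → ℂ) => g ((Fin.cons q.1 q.2 : Fin (n+1) → ℂ)) * f ((Fin.cons q.1 q.2 : Fin (n+1) → ℂ)) := by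
    have : (fun q : ℂ × (Fin n → ℂ) => g ((Fin.cons q.1 q.2 : Fin (n+1) → ℂ)) * f ((Fin.cons q.1 q.2 : Fin (n+1) → ℂ))) =
        fun q : ℂ × (Fin n → ℂ) =>
          g ((MeasurableEquiv.piFinSuccAbove (fun _ : Fin (n+1) => ℂ) 0).symm q) *
          f ((MeasurableEquiv.piFinSuccAbove (fun _ : Fin (n+1) => ℂ) 0).symm q) := by
      funext q; rw [hsymm q.1 q.2]
    rw [this]; exact hgf
  rw [lintegral_prod_symm _ hgf'.aemeasurable]
  -- pointwise computations
  have hsum3 : ∀ (w : ℂ) (y : Fin n → ℂ),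
      ∑ j, ‖(Fin.cons w y : Fin (n+1) → ℂ) j‖ ^ 2 = ‖w‖ ^ 2 + ∑ k, ‖y k‖ ^ 2 := by
    intro w y; rw [Fin.sum_univ_succ]; simp
  have hsumb : ∀ (w : ℂ) (y : Fin n → ℂ),
      ∑ j, (Fin.cons w y : Fin (n+1) → ℂ) j * b j = ∑ k, y k * b k.succ := by
    intro w y; rw [Fin.sum_univ_succ]; simp [hb0]
  have hsuma : ∀ (w : ℂ) (y : Fin n → ℂ),
      ∑ j, (Fin.cons w y : Fin (n+1) → ℂ) j * a j = w + ∑ k, y k * a k.succ := by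
    intro w y; rw [Fin.sum_univ_succ]; simp [ha]
  have key : ∀ (w : ℂ) (y : Fin n → ℂ),
      g (Fin.cons w y : Fin (n+1) → ℂ) * f (Fin.cons w y : Fin (n+1) → ℂ) ≤
        (ENNReal.ofReal cπ * ENNReal.ofReal (Real.exp (-∑ k, ‖y k‖ ^ 2)) *
          ENNReal.ofReal ‖∑ k, y k * b k.succ‖) *
        ((ENNReal.ofReal ‖w - (v - ∑ k, y k * a k.succ)‖)⁻¹ *
          ENNReal.ofReal (Real.exp (-‖w‖ ^ 2))) := by
    intro w y
    have hgval : g (Fin.cons w y : Fin (n+1) → ℂ) =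
        ENNReal.ofReal cπ * ENNReal.ofReal (Real.exp (-‖w‖ ^ 2)) *
          ENNReal.ofReal (Real.exp (-∑ k, ‖y k‖ ^ 2)) := by
      rw [hgdef]
      simp only []
      rw [hsum3 w y, neg_add, Real.exp_add, ← mul_assoc,
        ENNReal.ofReal_mul (by positivity), ENNReal.ofReal_mul hcπ0]
    have hfval : f (Fin.cons w y : Fin (n+1) → ℂ) =
        ENNReal.ofReal (‖∑ k, y k * b k.succ‖ / ‖w - (v - ∑ k, y k * a k.succ)‖) := by
      rw [hfdef]
      simp only []
      rw [hsumb w y, hsuma w y, norm_div]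
      congr 3
      ring
    rw [hgval, hfval]
    calc ENNReal.ofReal cπ * ENNReal.ofReal (Real.exp (-‖w‖ ^ 2)) *
          ENNReal.ofReal (Real.exp (-∑ k, ‖y k‖ ^ 2)) *
          ENNReal.ofReal (‖∑ k, y k * b k.succ‖ / ‖w - (v - ∑ k, y k * a k.succ)‖)
        ≤ ENNReal.ofReal cπ * ENNReal.ofReal (Real.exp (-‖w‖ ^ 2)) *
          ENNReal.ofReal (Real.exp (-∑ k, ‖y k‖ ^ 2)) *
          (ENNReal.ofReal ‖∑ k, y k * b k.succ‖ *
            (ENNReal.ofReal ‖w - (v - ∑ k, y k * a k.succ)‖)⁻¹) := by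
          gcongr
          exact ofReal_div_le' (norm_nonneg _)
      _ = _ := by ring
  calc ∫⁻ y : Fin n → ℂ, ∫⁻ w : ℂ, g (Fin.cons w y : Fin (n+1) → ℂ) * f (Fin.cons w y : Fin (n+1) → ℂ)
        ≤ ∫⁻ y : Fin n → ℂ,
            (ENNReal.ofReal cπ * ENNReal.ofReal (Real.exp (-∑ k, ‖y k‖ ^ 2)) *
              ENNReal.ofReal ‖∑ k, y k * b k.succ‖) * K := by
        apply lintegral_mono
        intro y
        calc ∫⁻ w : ℂ, g (Fin.cons w y : Fin (n+1) → ℂ) * f (Fin.cons w y : Fin (n+1) → ℂ)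
            ≤ ∫⁻ w : ℂ,
              (ENNReal.ofReal cπ * ENNReal.ofReal (Real.exp (-∑ k, ‖y k‖ ^ 2)) *
                ENNReal.ofReal ‖∑ k, y k * b k.succ‖) *
              ((ENNReal.ofReal ‖w - (v - ∑ k, y k * a k.succ)‖)⁻¹ *
                ENNReal.ofReal (Real.exp (-‖w‖ ^ 2))) := lintegral_mono fun w => key w y
          _ = (ENNReal.ofReal cπ * ENNReal.ofReal (Real.exp (-∑ k, ‖y k‖ ^ 2)) *
                ENNReal.ofReal ‖∑ k, y k * b k.succ‖) *
              ∫⁻ w : ℂ, (ENNReal.ofReal ‖w - (v - ∑ k, y k * a k.succ)‖)⁻¹ *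
                ENNReal.ofReal (Real.exp (-‖w‖ ^ 2)) := by
              rw [lintegral_const_mul' _ _ (by
                exact ENNReal.mul_ne_top
                  (ENNReal.mul_ne_top ENNReal.ofReal_ne_top ENNReal.ofReal_ne_top)
                  ENNReal.ofReal_ne_top)]
          _ ≤ _ := mul_le_mul_right (hK _) _
    _ ≤ ∫⁻ y : Fin n → ℂ, ENNReal.ofReal cπ * ENNReal.ofReal Cb * K *
          ENNReal.ofReal ((∑ k, ‖y k‖) * Real.exp (-∑ k, ‖y k‖ ^ 2)) := by
        apply lintegral_mono
        intro y
        have hBy : ‖∑ k, y k * b k.succ‖ ≤ Cb * ∑ k, ‖y k‖ := by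
          calc ‖∑ k, y k * b k.succ‖ ≤ ∑ k, ‖y k * b k.succ‖ := norm_sum_le _ _
            _ ≤ ∑ k, ‖y k‖ * Cb := by
                apply Finset.sum_le_sum
                intro k _
                rw [norm_mul]
                exact mul_le_mul_of_nonneg_left (hCb _) (norm_nonneg _)
            _ = Cb * ∑ k, ‖y k‖ := by rw [← Finset.sum_mul]; ring
        calc ENNReal.ofReal cπ * ENNReal.ofReal (Real.exp (-∑ k, ‖y k‖ ^ 2)) *
              ENNReal.ofReal ‖∑ k, y k * b k.succ‖ * K
            ≤ ENNReal.ofReal cπ * ENNReal.ofReal (Real.exp (-∑ k, ‖y k‖ ^ 2)) *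
              ENNReal.ofReal (Cb * ∑ k, ‖y k‖) * K := by
              first
              | (gcongr; exact ENNReal.ofReal_le_ofReal hBy)
              | gcongr
          _ = ENNReal.ofReal cπ * ENNReal.ofReal Cb * K *
              ENNReal.ofReal ((∑ k, ‖y k‖) * Real.exp (-∑ k, ‖y k‖ ^ 2)) := by
              rw [ENNReal.ofReal_mul hCb0,
                ENNReal.ofReal_mul (Finset.sum_nonneg fun k _ => norm_nonneg _)]
              ring
    _ = ENNReal.ofReal cπ * ENNReal.ofReal Cb * K * T := by
        rw [lintegral_const_mul' _ _ (by
          exact ENNReal.mul_ne_top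
            (ENNReal.mul_ne_top ENNReal.ofReal_ne_top ENNReal.ofReal_ne_top) hKne)]

section
variable {n : ℕ} {φ : ℕ → Polynomial ℂ}

example : SFinite (gaussianC n) := by unfold gaussianC; infer_instance

lemma Phi_eval (η : Fin (n+1) → ℂ) (z : ℂ) :
    (Phi n φ η).eval z = ∑ j : Fin (n+1), η j * (φ (j:ℕ)).eval z := by
  simp [Phi, eval_finset_sum]

lemma Phi_deriv_eval (η : Fin (n+1) → ℂ) (z : ℂ) :
    (Polynomial.derivative (Phi n φ η)).eval z
      = ∑ j : Fin (n+1), η j * (Polynomial.derivative (φ (j:ℕ))).eval z := by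
  simp [Phi, derivative_sum, derivative_C_mul, eval_finset_sum]

lemma eval_norm_le (q : Polynomial ℂ) {z : ℂ} {ϱ : ℝ} (hz : ‖z‖ = ϱ) :
    ‖q.eval z‖ ≤ ∑ k ∈ Finset.range (q.natDegree + 1), ‖q.coeff k‖ * ϱ ^ k := by
  rw [Polynomial.eval_eq_sum_range]
  refine (norm_sum_le _ _).trans ?_
  refine Finset.sum_le_sum fun k _ => ?_
  rw [norm_mul, norm_pow, hz]

lemma z_norm {θ ϱ : ℝ} (hϱ : 0 < ϱ) : ‖(ϱ : ℂ) * Complex.exp ((θ : ℂ) * Complex.I)‖ = ϱ := by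
  rw [norm_mul, Complex.norm_exp]
  simp [Complex.mul_re, abs_of_pos hϱ]

lemma zcont {ϱ : ℝ} : Continuous fun θ : ℝ => (ϱ : ℂ) * Complex.exp ((θ : ℂ) * Complex.I) :=
  continuous_const.mul (Complex.continuous_exp.comp (Complex.continuous_ofReal.mul
    continuous_const))

end

end AuxRIOC

/-- The double integral `∫_γ ∫_0^{2π} |Φ_η'(ϱe^{iθ})/(Φ_η(ϱe^{iθ}) − v)| ϱ dθ dγ(η)` is finite;
in particular the integrand is integrable with respect to the product of `γ` with the
arclength measure `ϱ dθ` on the circle of radius `ϱ`. -/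
theorem ratio_integrable_on_circle (n : ℕ) (hn : 1 ≤ n) (φ : ℕ → Polynomial ℂ)
    (hφ0 : φ 0 = 1) (hdeg : ∀ j ≤ n, (φ j).natDegree = j)
    (v : ℂ) (ϱ : ℝ) (hϱ : 0 < ϱ) :
    (∫⁻ η, (∫⁻ θ in Set.Ioc 0 (2 * Real.pi),
        ENNReal.ofReal
          (‖(Polynomial.derivative (Phi n φ η)).eval ((ϱ : ℂ) * Complex.exp ((θ : ℂ) * Complex.I)) /
              ((Phi n φ η).eval ((ϱ : ℂ) * Complex.exp ((θ : ℂ) * Complex.I)) - v)‖ * ϱ))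
      ∂gaussianC n) < ⊤ ∧
    Integrable
      (fun p : (Fin (n + 1) → ℂ) × ℝ =>
        (Polynomial.derivative (Phi n φ p.1)).eval ((ϱ : ℂ) * Complex.exp ((p.2 : ℂ) * Complex.I)) /
          ((Phi n φ p.1).eval ((ϱ : ℂ) * Complex.exp ((p.2 : ℂ) * Complex.I)) - v))
      ((gaussianC n).prod
        (ENNReal.ofReal ϱ • volume.restrict (Set.Ioc 0 (2 * Real.pi)))) := by
  haveI hsf : SFinite (gaussianC n) := by unfold gaussianC; infer_instance
  set I : Set ℝ := Set.Ioc 0 (2 * Real.pi) with hI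
  set z : ℝ → ℂ := fun θ => (ϱ : ℂ) * Complex.exp ((θ : ℂ) * Complex.I) with hzdef
  set r : (Fin (n+1) → ℂ) → ℝ → ℂ := fun η θ =>
    (Polynomial.derivative (Phi n φ η)).eval (z θ) / ((Phi n φ η).eval (z θ) - v) with hrdef
  -- measurability
  have hnum : Measurable fun p : (Fin (n+1) → ℂ) × ℝ =>
      (Polynomial.derivative (Phi n φ p.1)).eval (z p.2) := by
    have he : (fun p : (Fin (n+1) → ℂ) × ℝ => (Polynomial.derivative (Phi n φ p.1)).eval (z p.2))
        = fun p => ∑ j : Fin (n+1), p.1 j * (Polynomial.derivative (φ (j:ℕ))).eval (z p.2) := by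
      funext p; exact Phi_deriv_eval _ _
    rw [he]
    exact Finset.measurable_sum _ fun j _ =>
      (((measurable_pi_apply j).comp measurable_fst).mul
        (((Polynomial.continuous _).comp zcont).measurable.comp measurable_snd))
  have hden : Measurable fun p : (Fin (n+1) → ℂ) × ℝ => (Phi n φ p.1).eval (z p.2) - v := by
    have he : (fun p : (Fin (n+1) → ℂ) × ℝ => (Phi n φ p.1).eval (z p.2))
        = fun p => ∑ j : Fin (n+1), p.1 j * (φ (j:ℕ)).eval (z p.2) := by
      funext p; exact Phi_eval _ _
    refine Measurable.sub_const ?_ v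
    rw [he]
    exact Finset.measurable_sum _ fun j _ =>
      (((measurable_pi_apply j).comp measurable_fst).mul
        (((Polynomial.continuous _).comp zcont).measurable.comp measurable_snd))
  have hrm : Measurable fun p : (Fin (n+1) → ℂ) × ℝ => r p.1 p.2 := hnum.div hden
  -- uniform bound over θ
  obtain ⟨C, hCne, hC⟩ := core n v (∑ j : Fin (n+1),
    ∑ k ∈ Finset.range ((Polynomial.derivative (φ (j:ℕ))).natDegree + 1),
      ‖(Polynomial.derivative (φ (j:ℕ))).coeff k‖ * ϱ ^ k)
  have hbound : ∀ θ : ℝ, ∫⁻ η, ENNReal.ofReal ‖r η θ‖ ∂gaussianC n ≤ C := by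
    intro θ
    have ha : (fun j : Fin (n+1) => (φ (j:ℕ)).eval (z θ)) 0 = 1 := by
      simp [hφ0]
    have hb : (fun j : Fin (n+1) => (Polynomial.derivative (φ (j:ℕ))).eval (z θ)) 0 = 0 := by
      simp [hφ0]
    have hcb : ∀ j : Fin (n+1),
        ‖(fun j : Fin (n+1) => (Polynomial.derivative (φ (j:ℕ))).eval (z θ)) j‖ ≤
          ∑ j : Fin (n+1), ∑ k ∈ Finset.range ((Polynomial.derivative (φ (j:ℕ))).natDegree + 1),
            ‖(Polynomial.derivative (φ (j:ℕ))).coeff k‖ * ϱ ^ k := by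
      intro j
      refine le_trans (eval_norm_le _ (z_norm hϱ)) ?_
      exact Finset.single_le_sum
        (f := fun j : Fin (n+1) =>
          ∑ k ∈ Finset.range ((Polynomial.derivative (φ (j:ℕ))).natDegree + 1),
            ‖(Polynomial.derivative (φ (j:ℕ))).coeff k‖ * ϱ ^ k)
        (fun i _ => Finset.sum_nonneg fun k _ => by positivity) (Finset.mem_univ j)
    have hco := hC (fun j : Fin (n+1) => (φ (j:ℕ)).eval (z θ))
      (fun j : Fin (n+1) => (Polynomial.derivative (φ (j:ℕ))).eval (z θ)) ha hb hcb
    refine le_trans (le_of_eq ?_) hco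
    refine lintegral_congr fun η => ?_
    rw [hrdef]
    simp only []
    rw [Phi_deriv_eval, Phi_eval]
  -- main finiteness
  have hFm : Measurable fun p : (Fin (n+1) → ℂ) × ℝ => ENNReal.ofReal ‖r p.1 p.2‖ :=
    ENNReal.measurable_ofReal.comp hrm.norm
  have MAIN : ∫⁻ η, ∫⁻ θ in I, ENNReal.ofReal ‖r η θ‖ ∂volume ∂gaussianC n < ⊤ := by
    rw [lintegral_lintegral_swap hFm.aemeasurable]
    calc ∫⁻ θ in I, ∫⁻ η, ENNReal.ofReal ‖r η θ‖ ∂gaussianC n ∂volume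
        ≤ ∫⁻ _ in I, C ∂volume := lintegral_mono fun θ => hbound θ
      _ = C * volume I := setLIntegral_const _ _
      _ < ⊤ := ENNReal.mul_lt_top hCne.lt_top (by rw [hI]; exact measure_Ioc_lt_top)
  constructor
  · have he : (fun η => ∫⁻ θ in I, ENNReal.ofReal (‖r η θ‖ * ϱ) ∂volume)
        = fun η => (∫⁻ θ in I, ENNReal.ofReal ‖r η θ‖ ∂volume) * ENNReal.ofReal ϱ := by
      funext η
      rw [← lintegral_mul_const' (ENNReal.ofReal ϱ) _ ENNReal.ofReal_ne_top]
      refine lintegral_congr fun θ => ?_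
      rw [← ENNReal.ofReal_mul (norm_nonneg _)]
    calc ∫⁻ η, ∫⁻ θ in I, ENNReal.ofReal (‖r η θ‖ * ϱ) ∂volume ∂gaussianC n
        = ∫⁻ η, (∫⁻ θ in I, ENNReal.ofReal ‖r η θ‖ ∂volume) * ENNReal.ofReal ϱ ∂gaussianC n := by
          rw [he]
      _ = (∫⁻ η, ∫⁻ θ in I, ENNReal.ofReal ‖r η θ‖ ∂volume ∂gaussianC n) * ENNReal.ofReal ϱ :=
          lintegral_mul_const' _ _ ENNReal.ofReal_ne_top
      _ < ⊤ := ENNReal.mul_lt_top MAIN ENNReal.ofReal_lt_top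
  · refine ⟨hrm.aestronglyMeasurable, ?_⟩
    rw [hasFiniteIntegral_def]
    calc ∫⁻ p, ‖r p.1 p.2‖₊ ∂((gaussianC n).prod (ENNReal.ofReal ϱ • volume.restrict I))
        = ∫⁻ η, ∫⁻ θ, (‖r η θ‖₊ : ℝ≥0∞) ∂(ENNReal.ofReal ϱ • volume.restrict I) ∂gaussianC n :=
          lintegral_prod _ hrm.nnnorm.coe_nnreal_ennreal.aemeasurable
      _ = ∫⁻ η, ENNReal.ofReal ϱ * ∫⁻ θ in I, (‖r η θ‖₊ : ℝ≥0∞) ∂volume ∂gaussianC n := by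
          refine lintegral_congr fun η => ?_
          rw [lintegral_smul_measure, smul_eq_mul]
      _ = ENNReal.ofReal ϱ * ∫⁻ η, ∫⁻ θ in I, (‖r η θ‖₊ : ℝ≥0∞) ∂volume ∂gaussianC n :=
          lintegral_const_mul' _ _ ENNReal.ofReal_ne_top
      _ < ⊤ := by
          refine ENNReal.mul_lt_top ENNReal.ofReal_lt_top ?_
          have : ∀ (η : Fin (n+1) → ℂ) (θ : ℝ), (‖r η θ‖₊ : ℝ≥0∞) = ENNReal.ofReal ‖r η θ‖ :=
            fun η θ => (ofReal_norm _).symm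
          simp_rw [this]
          exact MAIN
end

section
/- (Corollary 1.4.) For every fixed z ∈ ℂ, ρ_{n,v}(z) → 0 as |v| → ∞; moreover, for every bounded Borel set Θ ⊆ ℂ, E[N_Θ^{Φ_n,v}] → 0 as |v| → ∞. -/
open MeasureTheory Polynomial Filter Metric
open ComplexConjugate
open scoped Classical

open scoped ENNReal in
lemma exp_neg_norm_sq_integrable : Integrable (fun z : ℂ => Real.exp (-‖z‖ ^ 2)) := by
  have h1 : Integrable (fun x : ℝ => Real.exp (-x ^ 2)) := by
    simpa using integrable_exp_neg_mul_sq (b := (1 : ℝ)) one_pos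
  have h2 : Integrable (fun p : ℝ × ℝ => Real.exp (-p.1 ^ 2) * Real.exp (-p.2 ^ 2)) :=
    h1.mul_prod h1
  have h3 := (Complex.volume_preserving_equiv_real_prod.integrable_comp_emb
      (Complex.measurableEquivRealProd.measurableEmbedding)).2 h2
  refine h3.congr (Filter.Eventually.of_forall fun z => ?_)
  have hz : ‖z‖ ^ 2 = z.re ^ 2 + z.im ^ 2 := by
    rw [Complex.sq_norm, Complex.normSq_apply]; ring
  simp only [Function.comp, Complex.measurableEquivRealProd_apply, ← Real.exp_add]
  congr 1
  rw [hz]; ring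

instance gaussianC_isFiniteMeasure (n : ℕ) : IsFiniteMeasure (gaussianC n) := by
  constructor
  rw [gaussianC, withDensity_apply _ MeasurableSet.univ, Measure.restrict_univ]
  have hint : Integrable (fun η : Fin (n + 1) → ℂ =>
      (Real.pi ^ (n + 1))⁻¹ * Real.exp (-∑ j, ‖η j‖ ^ 2)) := by
    have h := (Integrable.fintype_prod (𝕜 := ℝ)
      (f := fun _ : Fin (n + 1) => fun z : ℂ => Real.exp (-‖z‖ ^ 2))
      fun _ => exp_neg_norm_sq_integrable)
    refine (h.const_mul ((Real.pi ^ (n + 1))⁻¹)).congr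
      (Filter.Eventually.of_forall fun η => ?_)
    show (Real.pi ^ (n + 1))⁻¹ * ∏ i : Fin (n + 1), Real.exp (-‖η i‖ ^ 2) = _
    rw [← Real.exp_sum, Finset.sum_neg_distrib]
  exact hint.lintegral_lt_top

open scoped ENNReal

/-- **Corollary 1.4.** For every fixed `z`, `ρ_{n,v}(z) → 0` as `|v| → ∞`; and for every
bounded Borel set `Θ`, `E[N_Θ^{Φ_n,v}] → 0` as `|v| → ∞`. -/
theorem density_and_mean_tendsto_zero (n : ℕ) (hn : 1 ≤ n) (φ : ℕ → Polynomial ℂ)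
    (hφ0 : φ 0 = 1) (hdeg : ∀ j ≤ n, (φ j).natDegree = j) :
    (∀ z : ℂ,
      Tendsto (fun v : ℂ => rhoDens φ n v z)
        (Filter.comap (fun v : ℂ => ‖v‖) Filter.atTop) (nhds 0)) ∧
    (∀ Θ : Set ℂ, MeasurableSet Θ → Bornology.IsBounded Θ →
      Tendsto (fun v : ℂ => ∫ η, (Nzeros n φ Θ v η : ℝ) ∂gaussianC n)
        (Filter.comap (fun v : ℂ => ‖v‖) Filter.atTop) (nhds 0)) := by
  have hpi : (0 : ℝ) < Real.pi := Real.pi_pos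
  constructor
  · intro z
    have hK1 : (1 : ℝ) ≤ Kd φ n z := by
      have h0 : (1 : ℝ) = ‖(φ (((0 : Fin (n + 1)) : ℕ))).eval z‖ ^ 2 := by simp [hφ0]
      unfold Kd
      rw [h0]
      exact Finset.single_le_sum (f := fun j : Fin (n + 1) => ‖(φ (j : ℕ)).eval z‖ ^ 2)
        (fun i _ => sq_nonneg _) (Finset.mem_univ (0 : Fin (n + 1)))
    have hK0 : (0 : ℝ) < Kd φ n z := by linarith
    have ht : Tendsto (fun v : ℂ => ‖v‖ ^ 2 / Kd φ n z)
        (Filter.comap (fun v : ℂ => ‖v‖) Filter.atTop) atTop :=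
      ((tendsto_pow_atTop two_ne_zero).atTop_div_const hK0).comp tendsto_comap
    have hG : Tendsto (fun s : ℝ =>
        (1 / Real.pi) * (K11 φ n z / Kd φ n z -
          (‖K01 φ n z‖ ^ 2 / (Kd φ n z) ^ 2) * (1 - s)) * Real.exp (-s)) atTop (nhds 0) := by
      have h1 := Real.tendsto_exp_neg_atTop_nhds_zero
      have h2 := Real.tendsto_pow_mul_exp_neg_atTop_nhds_zero 1
      have h3 := (h1.const_mul ((1 / Real.pi) * (K11 φ n z / Kd φ n z -
          ‖K01 φ n z‖ ^ 2 / (Kd φ n z) ^ 2))).add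
        (h2.const_mul ((1 / Real.pi) * (‖K01 φ n z‖ ^ 2 / (Kd φ n z) ^ 2)))
      simp only [mul_zero, add_zero] at h3
      exact h3.congr fun s => by ring
    have heq : (fun v : ℂ => rhoDens φ n v z) =
        (fun s : ℝ => (1 / Real.pi) * (K11 φ n z / Kd φ n z -
          (‖K01 φ n z‖ ^ 2 / (Kd φ n z) ^ 2) * (1 - s)) * Real.exp (-s)) ∘
        (fun v : ℂ => ‖v‖ ^ 2 / Kd φ n z) := by
      funext v
      simp only [rhoDens, Function.comp, neg_div]
    rw [heq]
    exact hG.comp ht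
  · intro Θ hΘm hΘb
    have hcomp : IsCompact (closure Θ) := hΘb.isCompact_closure
    have hCex : ∀ j : ℕ, ∃ Cj : ℝ, ∀ z ∈ closure Θ, ‖(φ j).eval z‖ ≤ Cj := fun j =>
      hcomp.exists_bound_of_continuousOn (Polynomial.continuous _).continuousOn
    choose Cb hCb using hCex
    set g : (Fin (n + 1) → ℂ) → ℝ := fun η => ∑ j : Fin (n + 1), Cb (j : ℕ) * ‖η j‖ with hgdef
    have hgm : Measurable g :=
      Finset.measurable_sum _ fun j _ => ((measurable_pi_apply j).norm).const_mul _
    set S : ℝ → Set (Fin (n + 1) → ℂ) := fun r => {η | r ≤ g η} with hSdef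
    have hSm : ∀ r, MeasurableSet (S r) := fun r => measurableSet_le measurable_const hgm
    have key : ∀ (v : ℂ) (η : Fin (n + 1) → ℂ),
        ENNReal.ofReal ‖(Nzeros n φ Θ v η : ℝ)‖ ≤
          Set.indicator (S ‖v‖) (fun _ => (n : ℝ≥0∞)) η := by
      intro v η
      by_cases hη : η ∈ S ‖v‖
      · rw [Set.indicator_of_mem hη]
        have hm : Nzeros n φ Θ v η ≤ n := by
          have h1 : Multiset.card ((Phi n φ η - Polynomial.C v).roots.filter (· ∈ Θ)) ≤
              Multiset.card (Phi n φ η - Polynomial.C v).roots :=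
            Multiset.card_le_card (Multiset.filter_le _ _)
          have h2 := Polynomial.card_roots' (Phi n φ η - Polynomial.C v)
          have h3 : (Phi n φ η - Polynomial.C v).natDegree ≤ n := by
            refine le_trans (Polynomial.natDegree_sub_le _ _) (max_le ?_ ?_)
            · unfold Phi
              refine Polynomial.natDegree_sum_le_of_forall_le _ _ fun j _ => ?_
              refine le_trans (Polynomial.natDegree_C_mul_le _ _) ?_
              rw [hdeg (j : ℕ) (Nat.lt_succ_iff.mp j.isLt)]
              exact Nat.lt_succ_iff.mp j.isLt
            · simp
          exact le_trans (le_trans h1 h2) h3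
        calc ENNReal.ofReal ‖(Nzeros n φ Θ v η : ℝ)‖
            = (Nzeros n φ Θ v η : ℝ≥0∞) := by
              simp
          _ ≤ (n : ℝ≥0∞) := by exact_mod_cast hm
      · have hz : Nzeros n φ Θ v η = 0 := by
          rw [Nzeros, Multiset.card_eq_zero, Multiset.filter_eq_nil]
          intro a ha haΘ
          obtain ⟨hp0, hroot⟩ := Polynomial.mem_roots'.1 ha
          have hv : (Phi n φ η).eval a = v := by
            have := hroot
            simpa [Polynomial.IsRoot, sub_eq_zero] using this
          refine hη ?_
          show ‖v‖ ≤ g η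
          rw [← hv]
          calc ‖(Phi n φ η).eval a‖ = ‖∑ j : Fin (n + 1), η j * (φ (j : ℕ)).eval a‖ := by
                simp [Phi, Polynomial.eval_finset_sum]
            _ ≤ ∑ j : Fin (n + 1), ‖η j * (φ (j : ℕ)).eval a‖ := norm_sum_le _ _
            _ ≤ ∑ j : Fin (n + 1), Cb (j : ℕ) * ‖η j‖ := by
                refine Finset.sum_le_sum fun j _ => ?_
                rw [norm_mul, mul_comm]
                exact mul_le_mul_of_nonneg_right (hCb _ a (subset_closure haΘ)) (norm_nonneg _)
        rw [hz]
        simpa using zero_le _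
    have hbound : ∀ v : ℂ, ‖∫ η, (Nzeros n φ Θ v η : ℝ) ∂gaussianC n‖ ≤
        ((n : ℝ≥0∞) * gaussianC n (S ‖v‖)).toReal := by
      intro v
      refine le_trans (norm_integral_le_lintegral_norm _) ?_
      refine ENNReal.toReal_mono
        (ENNReal.mul_ne_top (ENNReal.natCast_ne_top n) (measure_ne_top _ _)) ?_
      calc ∫⁻ η, ENNReal.ofReal ‖(Nzeros n φ Θ v η : ℝ)‖ ∂gaussianC n
          ≤ ∫⁻ η, Set.indicator (S ‖v‖) (fun _ => (n : ℝ≥0∞)) η ∂gaussianC n :=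
            lintegral_mono (key v)
        _ = (n : ℝ≥0∞) * gaussianC n (S ‖v‖) := lintegral_indicator_const (hSm _) _
    have hT : Tendsto (fun k : ℕ => gaussianC n (S (k : ℝ))) atTop (nhds 0) := by
      have h1 := tendsto_measure_iInter_atTop (μ := gaussianC n)
        (s := fun k : ℕ => S (k : ℝ))
        (fun k => (hSm _).nullMeasurableSet)
        (fun a b hab η hη => by
          simp only [hSdef, Set.mem_setOf_eq] at hη ⊢
          exact le_trans (Nat.cast_le.mpr hab) hη)
        ⟨0, measure_ne_top _ _⟩
      have h2 : (⋂ k : ℕ, S ((k : ℕ) : ℝ)) = (∅ : Set (Fin (n + 1) → ℂ)) := by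
        ext η
        simp only [Set.mem_iInter, Set.mem_empty_iff_false, iff_false, not_forall, hSdef,
          Set.mem_setOf_eq, not_le]
        exact exists_nat_gt (g η)
      rw [h2] at h1
      simpa [Function.comp_def] using h1
    have hfloor : Tendsto (fun r : ℝ => gaussianC n (S ((⌊r⌋₊ : ℕ) : ℝ))) atTop (nhds 0) :=
      hT.comp tendsto_nat_floor_atTop
    have hR : Tendsto (fun r : ℝ => gaussianC n (S r)) atTop (nhds 0) := by
      refine tendsto_of_tendsto_of_tendsto_of_le_of_le' tendsto_const_nhds hfloor
        (Eventually.of_forall fun r => zero_le) ?_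
      filter_upwards [eventually_ge_atTop (0 : ℝ)] with r hr
      exact measure_mono fun η hη => le_trans (Nat.floor_le hr) hη
    have hmul : Tendsto (fun r : ℝ => (n : ℝ≥0∞) * gaussianC n (S r)) atTop (nhds 0) := by
      have := ENNReal.Tendsto.const_mul (a := (n : ℝ≥0∞)) hR
        (Or.inr (ENNReal.natCast_ne_top n))
      simpa using this
    have hto : Tendsto (fun r : ℝ => ((n : ℝ≥0∞) * gaussianC n (S r)).toReal) atTop (nhds 0) := by
      have := (ENNReal.tendsto_toReal (a := 0) (by simp)).comp hmul
      simpa [Function.comp_def] using this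
    refine squeeze_zero_norm hbound ?_
    exact hto.comp tendsto_comap
end

section
/- If the sequence (φ_j) belongs to the Nevai class, then (1 − |z|²)·K_n(z,z)/|φ_{n+1}*(z)|² → 1 as n → ∞, uniformly on compact subsets of the open unit disk 𝔻. -/
open MeasureTheory Polynomial Filter Metric
open ComplexConjugate

/-- The reversed polynomial `φ*ⱼ(z) = z^j conj(φⱼ(1/conj z))`: conjugate the coefficients and
reverse their order. -/
noncomputable def revPoly (p : Polynomial ℂ) : Polynomial ℂ :=
  (p.map (starRingEnd ℂ)).reverse


set_option linter.unusedSectionVars false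


open MeasureTheory Polynomial Filter Metric
open ComplexConjugate

/-- auxiliary inner product of polynomials wrt μ -/
noncomputable def nkaIp (μ : MeasureTheory.Measure ℂ) (p q : Polynomial ℂ) : ℂ :=
  ∫ z, p.eval z * conj (q.eval z) ∂μ

section IpBasics

variable {μ : MeasureTheory.Measure ℂ} [IsProbabilityMeasure μ]
  (hae : ∀ᵐ z ∂μ, z * conj z = 1)

lemma nkaIp_aesm (p q : Polynomial ℂ) :
    AEStronglyMeasurable (fun z => p.eval z * conj (q.eval z)) μ :=
  (p.continuous.mul (Complex.continuous_conj.comp q.continuous)).aestronglyMeasurable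

include hae in
lemma nkaIp_integrable (p q : Polynomial ℂ) :
    Integrable (fun z => p.eval z * conj (q.eval z)) μ := by
  obtain ⟨C, hC⟩ := (isCompact_sphere (0:ℂ) 1).exists_bound_of_continuousOn
    ((p.continuous.mul (Complex.continuous_conj.comp q.continuous)).continuousOn)
  refine Integrable.mono' (integrable_const C) (nkaIp_aesm p q) ?_
  filter_upwards [hae] with z hz
  apply hC
  rw [mem_sphere_zero_iff_norm]
  have : Complex.normSq z = 1 := by
    have := Complex.mul_conj z
    rw [hz] at this
    exact_mod_cast this.symm
  have h2 : ‖z‖^2 = 1 := by rw [← Complex.sq_norm] at this; exact_mod_cast this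
  nlinarith [norm_nonneg z]

lemma nkaIp_conj (p q : Polynomial ℂ) : nkaIp μ p q = conj (nkaIp μ q p) := by
  rw [nkaIp, nkaIp, ← integral_conj]
  congr 1; funext z; simp [mul_comm]

lemma nkaIp_Cmul_left (c : ℂ) (p q : Polynomial ℂ) :
    nkaIp μ (Polynomial.C c * p) q = c * nkaIp μ p q := by
  have : (fun z => eval z (Polynomial.C c * p) * conj (eval z q))
      = fun z => c • (eval z p * conj (eval z q)) := by
    funext z; simp [smul_eq_mul]; ring
  rw [nkaIp, nkaIp, this, integral_smul, smul_eq_mul]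

lemma nkaIp_Cmul_right (c : ℂ) (p q : Polynomial ℂ) :
    nkaIp μ p (Polynomial.C c * q) = conj c * nkaIp μ p q := by
  have : (fun z => eval z p * conj (eval z (Polynomial.C c * q)))
      = fun z => (conj c) • (eval z p * conj (eval z q)) := by
    funext z; simp [smul_eq_mul]; ring
  rw [nkaIp, nkaIp, this, integral_smul, smul_eq_mul]

include hae in
lemma nkaIp_add_left (p q r : Polynomial ℂ) :
    nkaIp μ (p + q) r = nkaIp μ p r + nkaIp μ q r := by
  rw [nkaIp, nkaIp, nkaIp, ← integral_add (nkaIp_integrable hae p r) (nkaIp_integrable hae q r)]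
  congr 1; funext z; simp; ring

include hae in
lemma nkaIp_add_right (p q r : Polynomial ℂ) :
    nkaIp μ p (q + r) = nkaIp μ p q + nkaIp μ p r := by
  rw [nkaIp_conj p (q+r), nkaIp_add_left hae, map_add, ← nkaIp_conj, ← nkaIp_conj]

include hae in
lemma nkaIp_sub_left (p q r : Polynomial ℂ) :
    nkaIp μ (p - q) r = nkaIp μ p r - nkaIp μ q r := by
  have := nkaIp_add_left hae (p - q) q r
  rw [sub_add_cancel] at this
  linear_combination -this

include hae in
lemma nkaIp_sum_right (p : Polynomial ℂ) (s : Finset ℕ) (f : ℕ → Polynomial ℂ) :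
    nkaIp μ p (∑ i ∈ s, f i) = ∑ i ∈ s, nkaIp μ p (f i) := by
  classical
  induction s using Finset.induction with
  | empty => simp [nkaIp]
  | @insert a s h ih =>
      rw [Finset.sum_insert h, Finset.sum_insert h, nkaIp_add_right hae, ih]

include hae in
lemma nkaIp_shift (p q : Polynomial ℂ) :
    nkaIp μ (Polynomial.X * p) (Polynomial.X * q) = nkaIp μ p q := by
  rw [nkaIp, nkaIp]
  apply integral_congr_ae
  filter_upwards [hae] with z hz
  simp only [Polynomial.eval_mul, Polynomial.eval_X, map_mul]
  calc z * eval z p * ((starRingEnd ℂ) z * (starRingEnd ℂ) (eval z q))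
      = (z * conj z) * (eval z p * conj (eval z q)) := by ring
    _ = eval z p * conj (eval z q) := by rw [hz, one_mul]

end IpBasics

section RevPolyLemmas

open Polynomial ComplexConjugate

lemma revPoly_eq_reflect (p : Polynomial ℂ) :
    revPoly p = reflect p.natDegree (p.map (starRingEnd ℂ)) := by
  rw [revPoly, Polynomial.reverse, Polynomial.natDegree_map]

lemma revPoly_coeff (p : Polynomial ℂ) {k : ℕ} (hk : k ≤ p.natDegree) :
    (revPoly p).coeff k = conj (p.coeff (p.natDegree - k)) := by
  rw [revPoly_eq_reflect, coeff_reflect, revAt_le hk, coeff_map]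

lemma revPoly_coeff_of_gt (p : Polynomial ℂ) {k : ℕ} (hk : p.natDegree < k) :
    (revPoly p).coeff k = 0 := by
  rw [revPoly_eq_reflect, coeff_reflect, revAt_eq_self_of_lt hk, coeff_map,
    coeff_eq_zero_of_natDegree_lt hk, map_zero]

lemma natDegree_revPoly_le (p : Polynomial ℂ) : (revPoly p).natDegree ≤ p.natDegree :=
  natDegree_le_iff_coeff_eq_zero.2 fun _ hN => revPoly_coeff_of_gt p hN

lemma revPoly_coeff_zero (p : Polynomial ℂ) : (revPoly p).coeff 0 = conj p.leadingCoeff := by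
  rw [revPoly_coeff p (Nat.zero_le _), Nat.sub_zero, Polynomial.leadingCoeff]

lemma revPoly_C (c : ℂ) : revPoly (Polynomial.C c) = Polynomial.C (conj c) := by
  rw [revPoly, map_C, reverse_C]

lemma revPoly_eval (p : Polynomial ℂ) {z : ℂ} (hz : z ≠ 0) :
    (revPoly p).eval z = z ^ p.natDegree * conj (p.eval (1 / conj z)) := by
  set N := p.natDegree with hN
  have h1 : (revPoly p).natDegree < N + 1 := Nat.lt_succ_of_le (natDegree_revPoly_le p)
  have h2 : p.natDegree < N + 1 := Nat.lt_succ_of_le le_rfl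
  rw [eval_eq_sum_range' h1, eval_eq_sum_range' h2]
  have key : ∀ j ∈ Finset.range (N + 1),
      (revPoly p).coeff (N + 1 - 1 - j) * z ^ (N + 1 - 1 - j)
        = z ^ N * conj (p.coeff j * (1 / conj z) ^ j) := by
    intro j hj
    have hjN : j ≤ N := Nat.lt_succ_iff.mp (Finset.mem_range.mp hj)
    have h3 : N + 1 - 1 - j = N - j := by omega
    have h4 : N - (N - j) = j := by omega
    rw [h3, revPoly_coeff p (Nat.sub_le _ _), h4]
    have hconj : conj ((1 : ℂ) / conj z) = 1 / z := by
      rw [map_div₀, map_one, Complex.conj_conj]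
    rw [map_mul, map_pow, hconj]
    have hzpow : z ^ (N - j) = z ^ N * (1 / z) ^ j := by
      rw [one_div, inv_pow, pow_sub₀ z hz hjN]
    rw [hzpow]; ring
  calc ∑ i ∈ Finset.range (N + 1), (revPoly p).coeff i * z ^ i
      = ∑ j ∈ Finset.range (N + 1),
          (revPoly p).coeff (N + 1 - 1 - j) * z ^ (N + 1 - 1 - j) :=
        (Finset.sum_range_reflect (fun i => (revPoly p).coeff i * z ^ i) (N + 1)).symm
    _ = ∑ j ∈ Finset.range (N + 1), z ^ N * conj (p.coeff j * (1 / conj z) ^ j) :=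
        Finset.sum_congr rfl key
    _ = z ^ N * conj (∑ j ∈ Finset.range (N + 1), p.coeff j * (1 / conj z) ^ j) := by
        rw [← Finset.mul_sum, map_sum]

lemma norm_one_of_mul_conj {z : ℂ} (hz : z * conj z = 1) : ‖z‖ = 1 := by
  have h1 : Complex.normSq z = 1 := by
    have := Complex.mul_conj z; rw [hz] at this; exact_mod_cast this.symm
  have h2 : ‖z‖ ^ 2 = 1 := by rw [Complex.sq_norm]; exact h1
  nlinarith [norm_nonneg z]

lemma ne_zero_of_mul_conj {z : ℂ} (hz : z * conj z = 1) : z ≠ 0 := by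
  intro h; rw [h] at hz; simp at hz

lemma conj_eq_inv_of_mul_conj {z : ℂ} (hz : z * conj z = 1) : conj z = z⁻¹ := by
  rw [mul_comm] at hz; exact eq_inv_of_mul_eq_one_left hz

lemma revPoly_eval_circle (p : Polynomial ℂ) {z : ℂ} (hz : z * conj z = 1) :
    (revPoly p).eval z = z ^ p.natDegree * conj (p.eval z) := by
  have hz0 : z ≠ 0 := ne_zero_of_mul_conj hz
  rw [revPoly_eval p hz0]
  congr 3
  rw [conj_eq_inv_of_mul_conj hz, one_div, inv_inv]

lemma norm_revPoly_eval_circle (p : Polynomial ℂ) {z : ℂ} (hz : z * conj z = 1) :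
    ‖(revPoly p).eval z‖ = ‖p.eval z‖ := by
  rw [revPoly_eval_circle p hz, norm_mul, norm_pow, norm_one_of_mul_conj hz,
    RCLike.norm_conj, one_pow, one_mul]

end RevPolyLemmas

section CircleIp

open Polynomial ComplexConjugate MeasureTheory

variable {μ : MeasureTheory.Measure ℂ} [IsProbabilityMeasure μ]
  (hae : ∀ᵐ z ∂μ, z * conj z = 1)

include hae in
lemma nkaIp_sub_right (p q r : Polynomial ℂ) :
    nkaIp μ p (q - r) = nkaIp μ p q - nkaIp μ p r := by
  rw [nkaIp_conj p (q - r), nkaIp_sub_left hae, map_sub, ← nkaIp_conj, ← nkaIp_conj]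

include hae in
lemma nkaIp_expand_right (p q : Polynomial ℂ) :
    nkaIp μ p q = ∑ j ∈ Finset.range (q.natDegree + 1),
      conj (q.coeff j) * nkaIp μ p (Polynomial.X ^ j) := by
  conv_lhs => rw [q.as_sum_range]
  rw [nkaIp_sum_right hae]
  refine Finset.sum_congr rfl fun j _ => ?_
  rw [← Polynomial.C_mul_X_pow_eq_monomial, nkaIp_Cmul_right]

include hae in
lemma nkaIp_rev_pow (p : Polynomial ℂ) {k : ℕ} (hk : k ≤ p.natDegree) :
    nkaIp μ (revPoly p) (Polynomial.X ^ k)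
      = conj (nkaIp μ p (Polynomial.X ^ (p.natDegree - k))) := by
  rw [nkaIp, nkaIp, ← integral_conj]
  apply integral_congr_ae
  filter_upwards [hae] with z hz
  simp only [Polynomial.eval_pow, Polynomial.eval_X, map_mul, map_pow, Complex.conj_conj]
  rw [revPoly_eval_circle p hz]
  have hz0 : z ≠ 0 := ne_zero_of_mul_conj hz
  have key : z ^ p.natDegree * (conj z) ^ k = z ^ (p.natDegree - k) := by
    rw [conj_eq_inv_of_mul_conj hz, inv_pow, pow_sub₀ z hz0 hk]
  calc z ^ p.natDegree * conj (eval z p) * (conj z) ^ k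
      = (z ^ p.natDegree * (conj z) ^ k) * conj (eval z p) := by ring
    _ = z ^ (p.natDegree - k) * conj (eval z p) := by rw [key]
    _ = conj (eval z p) * z ^ (p.natDegree - k) := mul_comm _ _

include hae in
lemma nkaIp_rev_rev (p : Polynomial ℂ) :
    nkaIp μ (revPoly p) (revPoly p) = nkaIp μ p p := by
  rw [nkaIp, nkaIp]
  apply integral_congr_ae
  filter_upwards [hae] with z hz
  rw [revPoly_eval_circle p hz]
  simp only [map_mul, map_pow, Complex.conj_conj]
  have h1 : z ^ p.natDegree * (conj z) ^ p.natDegree = 1 := by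
    rw [← mul_pow, hz, one_pow]
  calc z ^ p.natDegree * conj (eval z p) * ((conj z) ^ p.natDegree * eval z p)
      = (z ^ p.natDegree * (conj z) ^ p.natDegree) * (eval z p * conj (eval z p)) := by ring
    _ = eval z p * conj (eval z p) := by rw [h1, one_mul]

include hae in
lemma eq_zero_of_nkaIp_self (hsupp : ∀ s : Finset ℂ, μ ((↑s : Set ℂ)ᶜ) ≠ 0)
    (t : Polynomial ℂ) (h : nkaIp μ t t = 0) : t = 0 := by
  by_contra ht
  have hre : (∫ z, Complex.normSq (t.eval z) ∂μ : ℂ) = 0 := by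
    rw [← h, nkaIp]
    congr 1; funext z; rw [Complex.mul_conj]
  have hre' : ∫ z, Complex.normSq (t.eval z) ∂μ = 0 := by
    have h2 : ((∫ z, Complex.normSq (t.eval z) ∂μ : ℝ) : ℂ) = 0 := by
      rw [← hre]; exact integral_ofReal.symm
    exact_mod_cast h2
  have hint : Integrable (fun z => Complex.normSq (t.eval z)) μ := by
    have := (nkaIp_integrable hae t t).re
    refine this.congr (Filter.Eventually.of_forall fun z => ?_)
    simp [Complex.mul_conj]
  have hzero := (integral_eq_zero_iff_of_nonneg
    (fun z => Complex.normSq_nonneg _) hint).mp hre'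
  have hae0 : ∀ᵐ z ∂μ, t.eval z = 0 := by
    filter_upwards [hzero] with z hz
    exact Complex.normSq_eq_zero.mp hz
  have hmeas : μ {z : ℂ | t.eval z ≠ 0} = 0 := by
    rw [← MeasureTheory.ae_iff]
    filter_upwards [hae0] with z hz using hz
  refine hsupp t.roots.toFinset (measure_mono_null ?_ hmeas)
  intro z hz
  simp only [Set.mem_compl_iff, Finset.mem_coe, Multiset.mem_toFinset] at hz
  intro h0
  exact hz (Polynomial.mem_roots'.mpr ⟨ht, h0⟩)

end CircleIp

section PhiLemmas

open Polynomial ComplexConjugate MeasureTheory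

variable {μ : MeasureTheory.Measure ℂ} [IsProbabilityMeasure μ]
  (hae : ∀ᵐ z ∂μ, z * conj z = 1)
  {φ : ℕ → Polynomial ℂ}
  (hdeg : ∀ j, (φ j).natDegree = j)
  (hlead : ∀ j, 0 < ((φ j).leadingCoeff).re ∧ ((φ j).leadingCoeff).im = 0)
  (horth : ∀ j k, nkaIp μ (φ j) (φ k) = if j = k then 1 else 0)

lemma pos_re_ne_zero {c : ℂ} (h : 0 < c.re) : c ≠ 0 := by
  intro h0; rw [h0] at h; simp at h

include hlead in
lemma nka_kappa_ne (n : ℕ) : (φ n).leadingCoeff ≠ 0 := pos_re_ne_zero (hlead n).1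

include hlead in
lemma nka_kappa_real (n : ℕ) :
    (φ n).leadingCoeff = ((((φ n).leadingCoeff).re : ℝ) : ℂ) := by
  apply Complex.ext <;> simp [(hlead n).2]

include hae hdeg hlead horth in
lemma nkaIp_phi_pow : ∀ k m : ℕ, k < m → nkaIp μ (φ m) (Polynomial.X ^ k) = 0 := by
  intro k
  induction k using Nat.strong_induction_on with
  | _ k ih =>
    intro m hkm
    set κ := (φ k).leadingCoeff with hκ
    have hκne : κ ≠ 0 := nka_kappa_ne hlead k
    set r : Polynomial ℂ := φ k - Polynomial.C κ * Polynomial.X ^ k with hr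
    have hXk : (Polynomial.X : Polynomial ℂ) ^ k
        = Polynomial.C κ⁻¹ * φ k - Polynomial.C κ⁻¹ * r := by
      rw [hr, mul_sub, sub_sub_cancel, ← mul_assoc, ← Polynomial.C_mul,
        inv_mul_cancel₀ hκne, Polynomial.C_1, one_mul]
    have hrcoeff : ∀ j, k ≤ j → r.coeff j = 0 := by
      intro j hj
      rcases eq_or_lt_of_le hj with h | h
      · rw [hr, Polynomial.coeff_sub, Polynomial.coeff_C_mul, Polynomial.coeff_X_pow,
          ← h, if_pos rfl, mul_one, hκ, Polynomial.leadingCoeff, hdeg k, sub_self]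
      · rw [hr, Polynomial.coeff_sub, Polynomial.coeff_C_mul, Polynomial.coeff_X_pow,
          if_neg (by omega), mul_zero, sub_zero,
          Polynomial.coeff_eq_zero_of_natDegree_lt (by rw [hdeg]; omega)]
    have hIr : nkaIp μ (φ m) r = 0 := by
      rw [nkaIp_expand_right hae]
      refine Finset.sum_eq_zero fun j hj => ?_
      rcases lt_or_ge j k with h | h
      · rw [ih j h m (h.trans hkm), mul_zero]
      · rw [hrcoeff j h, map_zero, zero_mul]
    have hIφ : nkaIp μ (φ m) (φ k) = 0 := by
      rw [horth m k, if_neg (by omega)]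
    rw [hXk, nkaIp_sub_right hae, nkaIp_Cmul_right, nkaIp_Cmul_right, hIr, hIφ]
    simp

include hae hdeg hlead horth in
lemma nkaIp_phi_low {m : ℕ} (q : Polynomial ℂ) (hq : q.natDegree < m) :
    nkaIp μ (φ m) q = 0 := by
  rw [nkaIp_expand_right hae]
  refine Finset.sum_eq_zero fun j hj => ?_
  have : j < m := by
    have := Finset.mem_range.mp hj; omega
  rw [nkaIp_phi_pow hae hdeg hlead horth j m this, mul_zero]

end PhiLemmas

section Szego

open Polynomial ComplexConjugate MeasureTheory

variable {μ : MeasureTheory.Measure ℂ} [IsProbabilityMeasure μ]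
  (hae : ∀ᵐ z ∂μ, z * conj z = 1)
  (hsupp : ∀ s : Finset ℂ, μ ((↑s : Set ℂ)ᶜ) ≠ 0)
  {φ : ℕ → Polynomial ℂ}
  (hdeg : ∀ j, (φ j).natDegree = j)
  (hlead : ∀ j, 0 < ((φ j).leadingCoeff).re ∧ ((φ j).leadingCoeff).im = 0)
  (horth : ∀ j k, nkaIp μ (φ j) (φ k) = if j = k then 1 else 0)

include hae hsupp hdeg hlead horth in
lemma szego_rec (n : ℕ) :
    ∃ a : ℝ, ∃ b : ℂ, 0 < a ∧ a ^ 2 - Complex.normSq b = 1 ∧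
      φ (n + 1) = Polynomial.C (a : ℂ) * (Polynomial.X * φ n)
        + Polynomial.C b * revPoly (φ n) ∧
      revPoly (φ (n + 1)) = Polynomial.C (a : ℂ) * revPoly (φ n)
        + Polynomial.C (conj b) * (Polynomial.X * φ n) := by
  classical
  set κn := (φ n).leadingCoeff with hκn
  set κm := (φ (n + 1)).leadingCoeff with hκm
  have hκnne : κn ≠ 0 := nka_kappa_ne hlead n
  have hκmne : κm ≠ 0 := nka_kappa_ne hlead (n + 1)
  set a : ℝ := κm.re / κn.re with ha_def
  have ha : 0 < a := div_pos (hlead (n + 1)).1 (hlead n).1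
  have haC : (a : ℂ) = κm / κn := by
    rw [ha_def, Complex.ofReal_div, ← nka_kappa_real hlead n, ← nka_kappa_real hlead (n + 1)]
  have haκ : (a : ℂ) * κn = κm := by
    rw [haC, div_mul_cancel₀ _ hκnne]
  have haC0 : (a : ℂ) ≠ 0 := by
    simpa using ne_of_gt ha
  -- the remainder r = φ_{n+1} - a z φ_n
  set r : Polynomial ℂ := φ (n + 1) - Polynomial.C (a : ℂ) * (Polynomial.X * φ n) with hr
  have hrcoeff : ∀ j, n + 1 ≤ j → r.coeff j = 0 := by
    intro j hj
    have hXc : ∀ i, (Polynomial.X * φ n).coeff (i + 1) = (φ n).coeff i :=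
      fun i => Polynomial.coeff_X_mul (φ n) i
    obtain ⟨i, rfl⟩ : ∃ i, j = i + 1 := ⟨j - 1, by omega⟩
    rcases eq_or_lt_of_le hj with h | h
    · have hi : i = n := by omega
      rw [hi, hr, Polynomial.coeff_sub, Polynomial.coeff_C_mul, hXc,
        show (φ n).coeff n = κn by rw [hκn, Polynomial.leadingCoeff, hdeg n],
        show (φ (n + 1)).coeff (n + 1) = κm by rw [hκm, Polynomial.leadingCoeff, hdeg (n + 1)],
        haκ, sub_self]
    · rw [hr, Polynomial.coeff_sub, Polynomial.coeff_C_mul, hXc,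
        Polynomial.coeff_eq_zero_of_natDegree_lt (by rw [hdeg]; omega),
        Polynomial.coeff_eq_zero_of_natDegree_lt (by rw [hdeg]; omega), mul_zero, sub_self]
  set b : ℂ := r.coeff 0 / conj κn with hb_def
  set s : Polynomial ℂ := r - Polynomial.C b * revPoly (φ n) with hs
  have hs0 : s.coeff 0 = 0 := by
    rw [hs, Polynomial.coeff_sub, Polynomial.coeff_C_mul, revPoly_coeff_zero, ← hκn,
      hb_def, div_mul_cancel₀ _ (by simpa using hκnne), sub_self]
  have hscoeff : ∀ j, n + 1 ≤ j → s.coeff j = 0 := by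
    intro j hj
    rw [hs, Polynomial.coeff_sub, Polynomial.coeff_C_mul,
      revPoly_coeff_of_gt _ (by rw [hdeg]; omega), mul_zero, sub_zero, hrcoeff j hj]
  obtain ⟨t, hts⟩ : (Polynomial.X : Polynomial ℂ) ∣ s := Polynomial.X_dvd_iff.mpr hs0
  have htcoeff : ∀ j, n ≤ j → t.coeff j = 0 := by
    intro j hj
    have : s.coeff (j + 1) = t.coeff j := by rw [hts, Polynomial.coeff_X_mul]
    rw [← this, hscoeff (j + 1) (by omega)]
  -- orthogonality of s to z^k, 1 ≤ k ≤ n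
  have hsk : ∀ k, 1 ≤ k → k ≤ n → nkaIp μ s (Polynomial.X ^ k) = 0 := by
    intro k h1 h2
    have hIr : nkaIp μ r (Polynomial.X ^ k) = 0 := by
      have hIp : nkaIp μ (φ (n + 1)) (Polynomial.X ^ k) = 0 :=
        nkaIp_phi_low hae hdeg hlead horth _ (by simp [Polynomial.natDegree_X_pow]; omega)
      have hIx : nkaIp μ (Polynomial.X * φ n) (Polynomial.X ^ k) = 0 := by
        have hxk : (Polynomial.X : Polynomial ℂ) ^ k
            = Polynomial.X * Polynomial.X ^ (k - 1) := by
          rw [← pow_succ']; congr 1; omega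
        rw [hxk, nkaIp_shift hae]
        exact nkaIp_phi_low hae hdeg hlead horth _ (by simp [Polynomial.natDegree_X_pow]; omega)
      rw [hr, nkaIp_sub_left hae, hIp, nkaIp_Cmul_left, hIx, mul_zero, sub_self]
    have hIrev : nkaIp μ (revPoly (φ n)) (Polynomial.X ^ k) = 0 := by
      have hkn : k ≤ (φ n).natDegree := by rw [hdeg]; omega
      rw [nkaIp_rev_pow hae _ hkn, hdeg,
        nkaIp_phi_low hae hdeg hlead horth _ (by simp [Polynomial.natDegree_X_pow]; omega),
        map_zero]
    rw [hs, nkaIp_sub_left hae, hIr, nkaIp_Cmul_left, hIrev, mul_zero, sub_self]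
  -- t is orthogonal to z^j for j < n
  have htk : ∀ j, j < n → nkaIp μ t (Polynomial.X ^ j) = 0 := by
    intro j hj
    have : nkaIp μ t (Polynomial.X ^ j)
        = nkaIp μ (Polynomial.X * t) (Polynomial.X ^ (j + 1)) := by
      rw [show (Polynomial.X : Polynomial ℂ) ^ (j + 1)
          = Polynomial.X * Polynomial.X ^ j from pow_succ' _ _, nkaIp_shift hae]
    rw [this, ← hts, hsk (j + 1) (by omega) (by omega)]
  -- hence t = 0 and s = 0
  have ht0 : t = 0 := by
    by_contra ht
    have hdegt : t.natDegree < n := by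
      by_contra hnd
      exact (Polynomial.leadingCoeff_ne_zero.mpr ht) (htcoeff t.natDegree (by omega))
    have : nkaIp μ t t = 0 := by
      rw [nkaIp_expand_right hae]
      refine Finset.sum_eq_zero fun j hj => ?_
      have hjn : j < n := by have := Finset.mem_range.mp hj; omega
      rw [htk j hjn, mul_zero]
    exact ht (eq_zero_of_nkaIp_self hae hsupp t this)
  have hs0' : s = 0 := by rw [hts, ht0, mul_zero]
  have hrec : φ (n + 1) = Polynomial.C (a : ℂ) * (Polynomial.X * φ n)
      + Polynomial.C b * revPoly (φ n) := by
    have := sub_eq_zero.mp (by rw [← hs, ← hr] at *; exact hs0' : r - Polynomial.C b * revPoly (φ n) = 0)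
    rw [hr] at this
    linear_combination (norm := ring_nf) this
  -- inner product values
  have h11 : nkaIp μ (φ (n + 1)) (φ (n + 1)) = 1 := by rw [horth]; simp
  have hXX : nkaIp μ (Polynomial.X * φ n) (Polynomial.X * φ n) = 1 := by
    rw [nkaIp_shift hae, horth]; simp
  have hrr : nkaIp μ (revPoly (φ n)) (revPoly (φ n)) = 1 := by
    rw [nkaIp_rev_rev hae, horth]; simp
  have hps : nkaIp μ (φ (n + 1)) (revPoly (φ n)) = 0 := by
    refine nkaIp_phi_low hae hdeg hlead horth _ ?_
    have := natDegree_revPoly_le (φ n); rw [hdeg] at this; omega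
  set c : ℂ := nkaIp μ (Polynomial.X * φ n) (revPoly (φ n)) with hc_def
  have hc : (a : ℂ) * c + b = 0 := by
    have h0 := hps
    rw [hrec, nkaIp_add_left hae, nkaIp_Cmul_left, nkaIp_Cmul_left, ← hc_def, hrr] at h0
    linear_combination h0
  have hsp : nkaIp μ (revPoly (φ n)) (φ (n + 1)) = 0 := by
    rw [nkaIp_conj, hps, map_zero]
  have hconj_a : conj ((a : ℝ) : ℂ) = ((a : ℝ) : ℂ) := Complex.conj_ofReal a
  have hXp : nkaIp μ (Polynomial.X * φ n) (φ (n + 1)) = (a : ℂ) + conj b * c := by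
    conv_lhs => rw [hrec]
    rw [nkaIp_add_right hae, nkaIp_Cmul_right, nkaIp_Cmul_right, hXX, ← hc_def, hconj_a]
    ring
  have h11' : (a : ℂ) * ((a : ℂ) + conj b * c) = 1 := by
    have h0 := h11
    nth_rewrite 1 [hrec] at h0
    rw [nkaIp_add_left hae, nkaIp_Cmul_left, nkaIp_Cmul_left, hXp, hsp, mul_zero, add_zero]
      at h0
    exact h0
  have hkey : (a : ℂ) ^ 2 - b * conj b = 1 := by
    have hc' : c = -b / (a : ℂ) := by
      field_simp
      linear_combination hc
    rw [hc'] at h11'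
    field_simp at h11'
    linear_combination h11'
  have hreal : a ^ 2 - Complex.normSq b = 1 := by
    have h2 : ((a ^ 2 - Complex.normSq b : ℝ) : ℂ) = 1 := by
      push_cast
      rw [← Complex.mul_conj b]
      exact hkey
    exact_mod_cast h2
  -- the reversed recurrence
  have hrev : revPoly (φ (n + 1)) = Polynomial.C (a : ℂ) * revPoly (φ n)
      + Polynomial.C (conj b) * (Polynomial.X * φ n) := by
    have hroot : {z : ℂ | (revPoly (φ (n + 1)) - (Polynomial.C (a : ℂ) * revPoly (φ n)
        + Polynomial.C (conj b) * (Polynomial.X * φ n))).IsRoot z}.Infinite := by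
      refine Set.Infinite.mono ?_ ((Set.finite_singleton (0 : ℂ)).infinite_compl)
      intro z hz
      have hz0 : z ≠ 0 := hz
      simp only [Set.mem_setOf_eq, Polynomial.IsRoot, Polynomial.eval_sub,
        Polynomial.eval_add, Polynomial.eval_mul, Polynomial.eval_C, Polynomial.eval_X,
        sub_eq_zero]
      set w : ℂ := 1 / conj z with hw
      have hcz : conj z ≠ 0 := fun h => hz0 (by simpa using congrArg conj h)
      have hwne : w ≠ 0 := one_div_ne_zero hcz
      have h1 : Polynomial.eval z (revPoly (φ (n + 1)))
          = z ^ (n + 1) * conj (Polynomial.eval w (φ (n + 1))) := by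
        rw [revPoly_eval _ hz0, hdeg]
      have h3 : Polynomial.eval w (revPoly (φ n)) = w ^ n * conj (Polynomial.eval z (φ n)) := by
        rw [revPoly_eval _ hwne, hdeg]
        have : (1 : ℂ) / conj w = z := by
          rw [hw, map_div₀, map_one, Complex.conj_conj, one_div, one_div, inv_inv]
        rw [this]
      have h2 : Polynomial.eval z (revPoly (φ n)) = z ^ n * conj (Polynomial.eval w (φ n)) := by
        rw [revPoly_eval _ hz0, hdeg]
      have h4 : Polynomial.eval w (φ (n + 1))
          = (a : ℂ) * (w * Polynomial.eval w (φ n)) + b * (w ^ n * conj (Polynomial.eval z (φ n))) := by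
        conv_lhs => rw [hrec]
        simp [h3]
      have hcw : conj w = 1 / z := by rw [hw, map_div₀, map_one, Complex.conj_conj]
      rw [h1, h4, h2]
      simp only [map_add, map_mul, map_pow, Complex.conj_conj, hconj_a, hcw]
      field_simp
      have hzn : z ^ n * z⁻¹ ^ n = 1 := by rw [← mul_pow, mul_inv_cancel₀ hz0, one_pow]
      linear_combination (z ^ 2 * conj b * Polynomial.eval z (φ n)) * hzn
    have h0 := Polynomial.eq_zero_of_infinite_isRoot _ hroot
    linear_combination (norm := ring_nf) h0
  exact ⟨a, b, ha, hreal, hrec, hrev⟩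

end Szego

section CD

open Polynomial ComplexConjugate MeasureTheory

lemma nka_norm_sq_eq (w : ℂ) : ‖w‖ ^ 2 = Complex.normSq w := by
  rw [Complex.sq_norm]

lemma nka_alg (a : ℝ) (b z P Q : ℂ) :
    Complex.normSq ((a : ℂ) * Q + conj b * (z * P))
      - Complex.normSq ((a : ℂ) * (z * P) + b * Q)
      = (a ^ 2 - Complex.normSq b) * (Complex.normSq Q - Complex.normSq z * Complex.normSq P) := by
  simp only [Complex.normSq_apply, Complex.add_re, Complex.add_im, Complex.mul_re,
    Complex.mul_im, Complex.conj_re, Complex.conj_im, Complex.ofReal_re, Complex.ofReal_im]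
  ring

lemma Kd_succ (φ : ℕ → Polynomial ℂ) (n : ℕ) (z : ℂ) :
    Kd φ (n + 1) z = Kd φ n z + ‖(φ (n + 1)).eval z‖ ^ 2 := by
  rw [Kd, Kd, Fin.sum_univ_castSucc]
  simp

variable {μ : MeasureTheory.Measure ℂ} [IsProbabilityMeasure μ]
  (hae : ∀ᵐ z ∂μ, z * conj z = 1)
  (hsupp : ∀ s : Finset ℂ, μ ((↑s : Set ℂ)ᶜ) ≠ 0)
  {φ : ℕ → Polynomial ℂ}
  (hdeg : ∀ j, (φ j).natDegree = j)
  (hlead : ∀ j, 0 < ((φ j).leadingCoeff).re ∧ ((φ j).leadingCoeff).im = 0)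
  (horth : ∀ j k, nkaIp μ (φ j) (φ k) = if j = k then 1 else 0)

include hae hsupp hdeg hlead horth in
lemma nka_step (n : ℕ) (z : ℂ) :
    ‖(revPoly (φ (n + 1))).eval z‖ ^ 2 - ‖(φ (n + 1)).eval z‖ ^ 2
      = ‖(revPoly (φ n)).eval z‖ ^ 2 - ‖z‖ ^ 2 * ‖(φ n).eval z‖ ^ 2 := by
  obtain ⟨a, b, _, hab, hrec, hrev⟩ := szego_rec hae hsupp hdeg hlead horth n
  have E1 : (φ (n + 1)).eval z
      = (a : ℂ) * (z * (φ n).eval z) + b * (revPoly (φ n)).eval z := by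
    rw [hrec]; simp
  have E2 : (revPoly (φ (n + 1))).eval z
      = (a : ℂ) * (revPoly (φ n)).eval z + conj b * (z * (φ n).eval z) := by
    rw [hrev]; simp
  rw [E1, E2]
  simp only [nka_norm_sq_eq]
  rw [nka_alg a b z ((φ n).eval z) ((revPoly (φ n)).eval z), hab, one_mul]

include hae hsupp hdeg hlead horth in
lemma nka_CD (n : ℕ) (z : ℂ) :
    ‖(revPoly (φ (n + 1))).eval z‖ ^ 2
      = ‖(φ (n + 1)).eval z‖ ^ 2 + (1 - ‖z‖ ^ 2) * Kd φ n z := by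
  induction n with
  | zero =>
      have hstep := nka_step hae hsupp hdeg hlead horth 0 z
      have hC : φ 0 = Polynomial.C ((φ 0).coeff 0) := eq_C_of_natDegree_eq_zero (hdeg 0)
      have hrevC : revPoly (φ 0) = Polynomial.C (conj ((φ 0).coeff 0)) := by
        conv_lhs => rw [hC]
        rw [revPoly_C]
      have h0 : ‖(revPoly (φ 0)).eval z‖ ^ 2 = ‖(φ 0).eval z‖ ^ 2 := by
        rw [hrevC]
        conv_rhs => rw [hC]
        simp
      have hK : Kd φ 0 z = ‖(φ 0).eval z‖ ^ 2 := by
        rw [Kd]; simp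
      rw [hK]
      rw [h0] at hstep
      linarith
  | succ n ih =>
      have hstep := nka_step hae hsupp hdeg hlead horth (n + 1) z
      have hK := Kd_succ φ n z
      rw [ih] at hstep
      rw [hK]
      linarith [sq_nonneg ‖z‖]

end CD

/-- If the orthonormal polynomials `(φ_j)` of a probability measure on the unit circle with
infinite support belong to the Nevai class, then
`(1 − |z|²) K_n(z,z)/|φ*_{n+1}(z)|² → 1` locally uniformly on the open unit disk. -/
theorem nevai_kernel_asymptotics
    (μ : Measure ℂ) [IsProbabilityMeasure μ]
    (hcirc : μ {z : ℂ | ‖z‖ ≠ 1} = 0)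
    (hsupp : ∀ s : Finset ℂ, μ ((↑s : Set ℂ)ᶜ) ≠ 0)
    (φ : ℕ → Polynomial ℂ)
    (hdeg : ∀ j, (φ j).natDegree = j)
    (hlead : ∀ j, 0 < ((φ j).leadingCoeff).re ∧ ((φ j).leadingCoeff).im = 0)
    (horth : ∀ j k, (∫ z, (φ j).eval z * conj ((φ k).eval z) ∂μ)
      = if j = k then 1 else 0)
    (hNevai : TendstoLocallyUniformlyOn
      (fun j z => (φ j).eval z / (revPoly (φ j)).eval z) (fun _ => 0)
      Filter.atTop (Metric.ball (0 : ℂ) 1)) :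
    TendstoLocallyUniformlyOn
      (fun n z => (1 - ‖z‖ ^ 2) * Kd φ n z / ‖(revPoly (φ (n + 1))).eval z‖ ^ 2)
      (fun _ => 1) Filter.atTop (Metric.ball (0 : ℂ) 1) := by
  classical
  have hae : ∀ᵐ z ∂μ, z * conj z = 1 := by
    rw [MeasureTheory.ae_iff]
    refine measure_mono_null ?_ hcirc
    intro z hz
    simp only [Set.mem_setOf_eq] at hz ⊢
    intro h1
    apply hz
    have hn : Complex.normSq z = 1 := by
      rw [Complex.normSq_eq_norm_sq, h1, one_pow]
    rw [Complex.mul_conj, hn, Complex.ofReal_one]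
  have horth' : ∀ j k, nkaIp μ (φ j) (φ k) = if j = k then 1 else 0 := horth
  -- positivity of the kernel
  have hφ0 : ∀ z : ℂ, 0 < ‖(φ 0).eval z‖ ^ 2 := by
    intro z
    have hC : φ 0 = Polynomial.C ((φ 0).coeff 0) := Polynomial.eq_C_of_natDegree_eq_zero (hdeg 0)
    have hne : (φ 0).coeff 0 ≠ 0 := by
      have := nka_kappa_ne hlead 0
      rwa [Polynomial.leadingCoeff, hdeg 0] at this
    have hev : (φ 0).eval z = (φ 0).coeff 0 := by
      nth_rewrite 1 [hC]
      rw [Polynomial.eval_C]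
    rw [hev]
    exact pow_pos (norm_pos_iff.mpr hne) _
  have hKpos : ∀ n (z : ℂ), 0 < Kd φ n z := by
    intro n z
    refine lt_of_lt_of_le (hφ0 z) ?_
    rw [Kd]
    have h := Finset.single_le_sum (f := fun j : Fin (n + 1) => ‖(φ (j : ℕ)).eval z‖ ^ 2)
      (fun i _ => sq_nonneg _) (Finset.mem_univ (0 : Fin (n + 1)))
    simpa using h
  have hrevpos : ∀ n, ∀ z ∈ Metric.ball (0 : ℂ) 1,
      0 < ‖(revPoly (φ (n + 1))).eval z‖ ^ 2 := by
    intro n z hz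
    rw [nka_CD hae hsupp hdeg hlead horth' n z]
    have hz1 : ‖z‖ < 1 := by simpa using hz
    have : 0 < 1 - ‖z‖ ^ 2 := by nlinarith [norm_nonneg z]
    nlinarith [hKpos n z, sq_nonneg ‖(φ (n + 1)).eval z‖]
  -- pointwise identity on the ball
  have hident : ∀ n, ∀ z ∈ Metric.ball (0 : ℂ) 1,
      (1 - ‖z‖ ^ 2) * Kd φ n z / ‖(revPoly (φ (n + 1))).eval z‖ ^ 2
        = 1 - ‖(φ (n + 1)).eval z / (revPoly (φ (n + 1))).eval z‖ ^ 2 := by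
    intro n z hz
    have hpos := hrevpos n z hz
    have hne : ‖(revPoly (φ (n + 1))).eval z‖ ^ 2 ≠ 0 := ne_of_gt hpos
    rw [norm_div, div_pow]
    rw [nka_CD hae hsupp hdeg hlead horth' n z] at hne ⊢
    rw [eq_sub_iff_add_eq, ← add_div, div_eq_one_iff_eq hne]
    ring
  -- the limit
  rw [tendstoLocallyUniformlyOn_iff_forall_isCompact Metric.isOpen_ball] at hNevai ⊢
  intro K hK hKc
  have hN := hNevai K hK hKc
  rw [Metric.tendstoUniformlyOn_iff] at hN ⊢
  intro ε hε
  have hsε : 0 < Real.sqrt ε := Real.sqrt_pos.mpr hε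
  obtain ⟨N, hNε⟩ := Filter.eventually_atTop.mp (hN (Real.sqrt ε) hsε)
  refine Filter.eventually_atTop.mpr ⟨N, fun n hn => ?_⟩
  intro x hx
  have hxball : x ∈ Metric.ball (0 : ℂ) 1 := hK hx
  rw [hident n x hxball]
  have hq := hNε (n + 1) (by omega) x hx
  rw [Real.dist_eq]
  have hq' : ‖(φ (n + 1)).eval x / (revPoly (φ (n + 1))).eval x‖ < Real.sqrt ε := by
    have := hq
    rw [dist_comm, dist_zero_right] at this
    exact this
  have hq2 : ‖(φ (n + 1)).eval x / (revPoly (φ (n + 1))).eval x‖ ^ 2 < ε :=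
    (Real.lt_sqrt (norm_nonneg _)).mp hq'
  have : |1 - (1 - ‖(φ (n + 1)).eval x / (revPoly (φ (n + 1))).eval x‖ ^ 2)|
      = ‖(φ (n + 1)).eval x / (revPoly (φ (n + 1))).eval x‖ ^ 2 := by
    rw [show (1 : ℝ) - (1 - ‖(φ (n + 1)).eval x / (revPoly (φ (n + 1))).eval x‖ ^ 2)
        = ‖(φ (n + 1)).eval x / (revPoly (φ (n + 1))).eval x‖ ^ 2 from by ring]
    exact abs_of_nonneg (sq_nonneg _)
  rw [this]
  exact hq2
end

section
/- For every v ∈ ℂ, uniformly on compact subsets of the open unit disk 𝔻, ρ_{n,v}(z) → (1/π)·( 1/(1 − |z|²)² + |v|²·|z|²/(1 − |z|²) )·exp(−|v|²·(1 − |z|²)) as n → ∞. -/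
open MeasureTheory Polynomial Filter Metric
open ComplexConjugate

section helpers
open Finset
variable {x : ℝ}

private lemma hxn' (hx0 : 0 ≤ x) (hx1 : x < 1) : ‖x‖ < 1 := by
  rwa [Real.norm_eq_abs, abs_of_nonneg hx0]

private lemma sumG1' (hx0 : 0 ≤ x) (hx1 : x < 1) :
    Summable (fun j : ℕ => (j : ℝ) * x ^ (j - 1)) := by
  refine (summable_nat_add_iff 1).mp ?_
  have hs1 : Summable (fun j : ℕ => (j : ℝ) * x ^ j) := by
    simpa using summable_pow_mul_geometric_of_norm_lt_one 1 (hxn' hx0 hx1)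
  refine (hs1.add (summable_geometric_of_lt_one hx0 hx1)).congr fun n => ?_
  push_cast [Nat.add_sub_cancel]
  ring

private lemma sumG2' (hx0 : 0 ≤ x) (hx1 : x < 1) :
    Summable (fun j : ℕ => (j : ℝ) ^ 2 * x ^ (j - 1)) := by
  refine (summable_nat_add_iff 1).mp ?_
  have hs2 : Summable (fun j : ℕ => (j : ℝ) ^ 2 * x ^ j) := by
    simpa using summable_pow_mul_geometric_of_norm_lt_one 2 (hxn' hx0 hx1)
  have hs1 : Summable (fun j : ℕ => (j : ℝ) * x ^ j) := by
    simpa using summable_pow_mul_geometric_of_norm_lt_one 1 (hxn' hx0 hx1)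
  refine ((hs2.add (hs1.mul_left 2)).add (summable_geometric_of_lt_one hx0 hx1)).congr fun n => ?_
  push_cast [Nat.add_sub_cancel]
  ring

private lemma tsum_sq_geo' (hx0 : 0 ≤ x) (hx1 : x < 1) :
    ∑' j : ℕ, (j : ℝ) ^ 2 * x ^ j = x * (1 + x) / (1 - x) ^ 3 := by
  have hpos : (0:ℝ) < 1 - x := by linarith
  have hne : (1 : ℝ) - x ≠ 0 := ne_of_gt hpos
  have hs2 : Summable (fun j : ℕ => (j : ℝ) ^ 2 * x ^ j) := by
    simpa using summable_pow_mul_geometric_of_norm_lt_one 2 (hxn' hx0 hx1)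
  have hs1 : Summable (fun j : ℕ => (j : ℝ) * x ^ j) := by
    simpa using summable_pow_mul_geometric_of_norm_lt_one 1 (hxn' hx0 hx1)
  have hs0 : Summable (fun j : ℕ => x ^ j) := summable_geometric_of_lt_one hx0 hx1
  have h1 : ∑' j : ℕ, (j:ℝ) * x ^ j = x / (1-x)^2 :=
    tsum_coe_mul_geometric_of_norm_lt_one (hxn' hx0 hx1)
  have h0 : ∑' j : ℕ, x ^ j = (1-x)⁻¹ := tsum_geometric_of_lt_one hx0 hx1
  set T := ∑' j : ℕ, (j : ℝ) ^ 2 * x ^ j with hT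
  have key : T = x * T + 2 * x * (x / (1-x)^2) + x * (1-x)⁻¹ := by
    conv_lhs => rw [hT, Summable.tsum_eq_zero_add hs2]
    have hc : ∀ j : ℕ, ((j+1:ℕ):ℝ)^2 * x^(j+1)
        = x * ((j:ℝ)^2 * x^j) + (2*x) * ((j:ℝ) * x^j) + x * x^j := by
      intro j; push_cast; ring
    rw [tsum_congr hc]
    rw [Summable.tsum_add ((hs2.mul_left x).add (hs1.mul_left (2*x))) (hs0.mul_left x),
        Summable.tsum_add (hs2.mul_left x) (hs1.mul_left (2*x)),
        tsum_mul_left, tsum_mul_left, tsum_mul_left, h1, h0]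
    push_cast
    ring_nf
    rw [show (∑' j : ℕ, x ^ j * (j:ℝ) ^ 2) = T from by rw [hT]; exact tsum_congr fun j => mul_comm _ _]
    ring
  have e1 : T * (1 - x) = 2 * x * (x / (1-x)^2) + x * (1-x)⁻¹ := by linear_combination key
  have e2 : T * (1-x)^3 = (2 * x * (x / (1-x)^2) + x * (1-x)⁻¹) * (1-x)^2 := by
    rw [← e1]; ring
  have e3 : (2 * x * (x / (1-x)^2) + x * (1-x)⁻¹) * (1-x)^2 = 2*x^2 + x*(1-x) := by
    field_simp
  rw [eq_div_iff (by positivity), e2, e3]; ring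

private lemma tsumB' (hx0 : 0 ≤ x) (hx1 : x < 1) :
    ∑' j : ℕ, (j : ℝ) * x ^ (j - 1) = 1 / (1 - x) ^ 2 := by
  have hne : (1 : ℝ) - x ≠ 0 := by linarith
  have hs1 : Summable (fun j : ℕ => (j : ℝ) * x ^ j) := by
    simpa using summable_pow_mul_geometric_of_norm_lt_one 1 (hxn' hx0 hx1)
  have hs0 : Summable (fun j : ℕ => x ^ j) := summable_geometric_of_lt_one hx0 hx1
  rw [Summable.tsum_eq_zero_add (sumG1' hx0 hx1)]
  have hc : ∀ j : ℕ, ((j+1:ℕ):ℝ) * x ^ (j + 1 - 1) = (j:ℝ) * x ^ j + x ^ j := by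
    intro j; push_cast [Nat.add_sub_cancel]; ring
  rw [tsum_congr hc, Summable.tsum_add hs1 hs0, tsum_coe_mul_geometric_of_norm_lt_one (hxn' hx0 hx1),
      tsum_geometric_of_lt_one hx0 hx1]
  push_cast
  field_simp
  ring

private lemma tsumA' (hx0 : 0 ≤ x) (hx1 : x < 1) :
    ∑' j : ℕ, (j : ℝ) ^ 2 * x ^ (j - 1) = (1 + x) / (1 - x) ^ 3 := by
  have hne : (1 : ℝ) - x ≠ 0 := by linarith
  have hs2 : Summable (fun j : ℕ => (j : ℝ) ^ 2 * x ^ j) := by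
    simpa using summable_pow_mul_geometric_of_norm_lt_one 2 (hxn' hx0 hx1)
  have hs1 : Summable (fun j : ℕ => (j : ℝ) * x ^ j) := by
    simpa using summable_pow_mul_geometric_of_norm_lt_one 1 (hxn' hx0 hx1)
  have hs0 : Summable (fun j : ℕ => x ^ j) := summable_geometric_of_lt_one hx0 hx1
  rw [Summable.tsum_eq_zero_add (sumG2' hx0 hx1)]
  have hc : ∀ j : ℕ, ((j+1:ℕ):ℝ) ^ 2 * x ^ (j + 1 - 1)
      = (j:ℝ)^2 * x ^ j + 2 * ((j:ℝ) * x ^ j) + x ^ j := by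
    intro j; push_cast [Nat.add_sub_cancel]; ring
  rw [tsum_congr hc, Summable.tsum_add (hs2.add (hs1.mul_left 2)) hs0, Summable.tsum_add hs2 (hs1.mul_left 2),
      tsum_mul_left, tsum_sq_geo' hx0 hx1, tsum_coe_mul_geometric_of_norm_lt_one (hxn' hx0 hx1),
      tsum_geometric_of_lt_one hx0 hx1]
  push_cast
  field_simp
  ring

private lemma abs_inv_sub_inv_le' {a s : ℝ} (ha : 1 ≤ a) (hs : 1 ≤ s) :
    |s⁻¹ - a⁻¹| ≤ |s - a| := by
  have ha0 : (0:ℝ) < a := by linarith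
  have hs0 : (0:ℝ) < s := by linarith
  have h : s⁻¹ - a⁻¹ = (a - s) * (s * a)⁻¹ := by field_simp
  rw [h, abs_mul, abs_inv, abs_of_pos (mul_pos hs0 ha0), abs_sub_comm]
  have h1 : (s * a)⁻¹ ≤ 1 := by
    rw [inv_le_one_iff₀]; right; nlinarith
  calc |s - a| * (s * a)⁻¹ ≤ |s - a| * 1 :=
        mul_le_mul_of_nonneg_left h1 (abs_nonneg _)
    _ = |s - a| := mul_one _

private lemma TendstoUniformlyOn.shift' {α β : Type*} [UniformSpace β] {F : ℕ → α → β}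
    {f : α → β} {s : Set α} (h : TendstoUniformlyOn F f atTop s) :
    TendstoUniformlyOn (fun n => F (n + 1)) f atTop s :=
  fun u hu => (tendsto_add_atTop_nat 1).eventually (h u hu)

private lemma uco_comp' {α β γ : Type*} [MetricSpace β] [MetricSpace γ] {K : Set α} {D : Set β}
    {Φ : β → γ} (hΦ : UniformContinuousOn Φ D) {F : ℕ → α → β} {f : α → β}
    (hF : TendstoUniformlyOn F f atTop K)
    (hFD : ∀ n z, z ∈ K → F n z ∈ D) (hfD : ∀ z, z ∈ K → f z ∈ D) :
    TendstoUniformlyOn (fun n z => Φ (F n z)) (fun z => Φ (f z)) atTop K := by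
  rw [Metric.tendstoUniformlyOn_iff] at hF ⊢
  rw [Metric.uniformContinuousOn_iff] at hΦ
  intro ε hε
  obtain ⟨δ, hδ, hδε⟩ := hΦ ε hε
  filter_upwards [hF δ hδ] with n hn z hz
  exact hδε (f z) (hfD z hz) (F n z) (hFD n z hz) (hn z hz)

end helpers

section kernels
open Finset

private lemma Kd_mono' (n : ℕ) (z : ℂ) :
    Kd (fun j => Polynomial.X ^ j) n z = ∑ j ∈ range (n+1), (‖z‖^2)^j := by
  rw [Kd, Fin.sum_univ_eq_sum_range (fun j => ‖(Polynomial.X ^ j).eval z‖ ^ 2) (n+1)]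
  refine Finset.sum_congr rfl fun j _ => ?_
  rw [eval_pow, eval_X, norm_pow, ← pow_mul, mul_comm, pow_mul]

private lemma K11_mono' (n : ℕ) (z : ℂ) :
    K11 (fun j => Polynomial.X ^ j) n z = ∑ j ∈ range (n+1), (j:ℝ)^2 * (‖z‖^2)^(j-1) := by
  rw [K11, Fin.sum_univ_eq_sum_range
    (fun j => ‖(Polynomial.derivative (Polynomial.X ^ j)).eval z‖ ^ 2) (n+1)]
  refine Finset.sum_congr rfl fun j _ => ?_
  rw [Polynomial.derivative_X_pow, eval_mul, eval_C, eval_pow, eval_X, norm_mul,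
    Complex.norm_natCast, norm_pow, mul_pow, ← pow_mul, mul_comm (j-1), pow_mul]

private lemma K01_mono' (n : ℕ) (z : ℂ) :
    K01 (fun j => Polynomial.X ^ j) n z
      = z * ((∑ j ∈ range (n+1), (j:ℝ) * (‖z‖^2)^(j-1) : ℝ) : ℂ) := by
  rw [K01, Fin.sum_univ_eq_sum_range (fun j => (Polynomial.X ^ j).eval z *
    conj ((Polynomial.derivative (Polynomial.X ^ j)).eval z)) (n+1), Complex.ofReal_sum,
    Finset.mul_sum]
  refine Finset.sum_congr rfl fun j _ => ?_
  rw [Polynomial.derivative_X_pow, eval_mul, eval_C, eval_pow, eval_X, map_mul,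
    map_natCast, eval_pow, eval_X, map_pow]
  cases j with
  | zero => simp
  | succ i =>
    push_cast [Nat.add_sub_cancel]
    have hzc : z * (starRingEnd ℂ) z = ((‖z‖:ℝ):ℂ)^2 := by
      rw [Complex.mul_conj, Complex.normSq_eq_norm_sq]; norm_cast
    have key : z ^ (i+1) * ((starRingEnd ℂ) z) ^ i = z * (((‖z‖:ℝ):ℂ)^2) ^ i := by
      rw [pow_succ', mul_assoc, ← mul_pow, hzc]
    rw [show z ^ (i+1) * (((i:ℂ)+1) * (starRingEnd ℂ) z ^ i)
        = (z^(i+1) * (starRingEnd ℂ) z ^ i) * ((i:ℂ)+1) from by ring, key]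
    ring

private lemma normSq_K01_mono' (n : ℕ) (z : ℂ) :
    ‖K01 (fun j => Polynomial.X ^ j) n z‖^2
      = ‖z‖^2 * (∑ j ∈ range (n+1), (j:ℝ) * (‖z‖^2)^(j-1))^2 := by
  rw [K01_mono', norm_mul, mul_pow, Complex.norm_real, Real.norm_eq_abs, sq_abs]

end kernels

/-- For the monomial basis `φ_j(z) = z^j`, for every `v ∈ ℂ`, locally uniformly on the open
unit disk, `ρ_{n,v}(z) → (1/π)(1/(1−|z|²)² + |v|²|z|²/(1−|z|²)) exp(−|v|²(1−|z|²))`. -/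
theorem monomial_density_asymptotics (v : ℂ) :
    TendstoLocallyUniformlyOn
      (fun n z => rhoDens (fun j => Polynomial.X ^ j) n v z)
      (fun z => (1 / Real.pi) *
          (1 / (1 - ‖z‖ ^ 2) ^ 2 + ‖v‖ ^ 2 * ‖z‖ ^ 2 / (1 - ‖z‖ ^ 2)) *
          Real.exp (-‖v‖ ^ 2 * (1 - ‖z‖ ^ 2)))
      Filter.atTop (Metric.ball (0 : ℂ) 1) := by
  rw [tendstoLocallyUniformlyOn_iff_forall_isCompact isOpen_ball]
  intro K hK hKc
  rcases K.eq_empty_or_nonempty with rfl | hne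
  · exact fun u hu => Filter.Eventually.of_forall fun n x hx => absurd hx (Set.notMem_empty x)
  obtain ⟨z₀, hz₀K, hmax⟩ := hKc.exists_isMaxOn hne continuous_norm.continuousOn
  set b := ‖z₀‖ with hb
  have hb0 : 0 ≤ b := norm_nonneg _
  have hb1 : b < 1 := by have := hK hz₀K; rwa [mem_ball, dist_zero_right] at this
  set q := b ^ 2 with hq
  have hq0 : 0 ≤ q := sq_nonneg b
  have hq1 : q < 1 := by nlinarith
  have hzq : ∀ z ∈ K, ‖z‖ ^ 2 ≤ q := fun z hz => by
    have h := hmax hz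
    simp only [Set.mem_setOf_eq] at h
    nlinarith [norm_nonneg z]
  have hxlt : ∀ z ∈ K, ‖z‖ ^ 2 < 1 := fun z hz => lt_of_le_of_lt (hzq z hz) hq1
  -- the three basic sequences
  set St : ℕ → ℂ → ℝ := fun n z => ∑ j ∈ Finset.range (n+1), (‖z‖^2)^j with hStdef
  set Bt : ℕ → ℂ → ℝ := fun n z => ∑ j ∈ Finset.range (n+1), (j:ℝ) * (‖z‖^2)^(j-1) with hBtdef
  set At : ℕ → ℂ → ℝ := fun n z => ∑ j ∈ Finset.range (n+1), (j:ℝ)^2 * (‖z‖^2)^(j-1) with hAtdef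
  -- uniform convergence of the basic sequences on K
  have hS : TendstoUniformlyOn St (fun z => (1 - ‖z‖^2)⁻¹) atTop K := by
    refine TendstoUniformlyOn.congr_right
      (TendstoUniformlyOn.shift' (tendstoUniformlyOn_tsum_nat
        (summable_geometric_of_lt_one hq0 hq1) (f := fun j z => (‖z‖^2)^j) (s := K)
        fun j z hz => ?_)) fun z hz => ?_
    · rw [Real.norm_eq_abs, abs_of_nonneg (by positivity)]
      exact pow_le_pow_left₀ (by positivity) (hzq z hz) j
    · exact tsum_geometric_of_lt_one (by positivity) (hxlt z hz)
  have hB : TendstoUniformlyOn Bt (fun z => 1 / (1 - ‖z‖^2)^2) atTop K := by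
    refine TendstoUniformlyOn.congr_right
      (TendstoUniformlyOn.shift' (tendstoUniformlyOn_tsum_nat
        (sumG1' hq0 hq1) (f := fun j z => (j:ℝ) * (‖z‖^2)^(j-1)) (s := K)
        fun j z hz => ?_)) fun z hz => ?_
    · rw [Real.norm_eq_abs, abs_of_nonneg (by positivity)]
      exact mul_le_mul_of_nonneg_left
        (pow_le_pow_left₀ (by positivity) (hzq z hz) (j-1)) (by positivity)
    · exact tsumB' (by positivity) (hxlt z hz)
  have hA : TendstoUniformlyOn At (fun z => (1 + ‖z‖^2) / (1 - ‖z‖^2)^3) atTop K := by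
    refine TendstoUniformlyOn.congr_right
      (TendstoUniformlyOn.shift' (tendstoUniformlyOn_tsum_nat
        (sumG2' hq0 hq1) (f := fun j z => (j:ℝ)^2 * (‖z‖^2)^(j-1)) (s := K)
        fun j z hz => ?_)) fun z hz => ?_
    · rw [Real.norm_eq_abs, abs_of_nonneg (by positivity)]
      exact mul_le_mul_of_nonneg_left
        (pow_le_pow_left₀ (by positivity) (hzq z hz) (j-1)) (by positivity)
    · exact tsumA' (by positivity) (hxlt z hz)
  -- lower bound on St
  have hSt1 : ∀ n (z : ℂ), 1 ≤ St n z := by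
    intro n z
    have h := Finset.single_le_sum (f := fun j => (‖z‖^2)^j)
      (fun j _ => by positivity) (Finset.mem_range.mpr (Nat.succ_pos n))
    simpa using h
  -- uniform convergence of the inverse
  have hT : TendstoUniformlyOn (fun n z => (St n z)⁻¹) (fun z => 1 - ‖z‖^2) atTop K := by
    rw [Metric.tendstoUniformlyOn_iff] at hS ⊢
    intro ε hε
    filter_upwards [hS ε hε] with n hn z hz
    have hpos : 0 < 1 - ‖z‖^2 := by have := hxlt z hz; linarith
    have h2 : (1:ℝ) ≤ (1 - ‖z‖^2)⁻¹ := by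
      rw [one_le_inv_iff₀]; exact ⟨hpos, by nlinarith [norm_nonneg z]⟩
    have key := abs_inv_sub_inv_le' (hSt1 n z) h2
    rw [inv_inv] at key
    calc dist (1 - ‖z‖^2) ((St n z)⁻¹) = |(1 - ‖z‖^2) - (St n z)⁻¹| := Real.dist_eq _ _
      _ ≤ |(1 - ‖z‖^2)⁻¹ - St n z| := key
      _ = dist ((1 - ‖z‖^2)⁻¹) (St n z) := (Real.dist_eq _ _).symm
      _ < ε := hn z hz
  -- bounds for compactness
  set c := (1 - q)⁻¹ with hc
  have hqpos : (0:ℝ) < 1 - q := by linarith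
  have hc1 : (1:ℝ) ≤ c := by
    rw [hc, one_le_inv_iff₀]; exact ⟨hqpos, by linarith⟩
  set M := 2 * c ^ 3 with hM
  have hdb : ∀ z ∈ K, 1 / (1 - ‖z‖^2)^2 ≤ M := by
    intro z hz
    have hle : 1 - q ≤ 1 - ‖z‖^2 := by have := hzq z hz; linarith
    have h1 : 1/(1-‖z‖^2)^2 ≤ 1/(1-q)^2 := by gcongr
    have h2 : 1/(1-q)^2 = c^2 := by rw [hc, one_div, ← inv_pow]
    nlinarith [h1, h2]
  have hda : ∀ z ∈ K, (1 + ‖z‖^2) / (1 - ‖z‖^2)^3 ≤ M := by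
    intro z hz
    have hle : 1 - q ≤ 1 - ‖z‖^2 := by have := hzq z hz; linarith
    have hx1 : ‖z‖^2 ≤ 1 := le_of_lt (hxlt z hz)
    have h1 : (1 + ‖z‖^2)/(1-‖z‖^2)^3 ≤ 2/(1-q)^3 := by
      gcongr <;> nlinarith [hzq z hz]
    have h2 : 2/(1-q)^3 = M := by rw [hM, hc, div_eq_mul_inv, ← inv_pow]
    linarith
  have hM0 : (0:ℝ) ≤ M := by nlinarith [pow_pos (lt_of_lt_of_le zero_lt_one hc1) 3]
  -- D membership
  set D : Set (ℝ × ℝ × ℝ × ℝ) :=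
    Set.Icc (0:ℝ) 1 ×ˢ (Set.Icc (0:ℝ) 1 ×ˢ (Set.Icc (0:ℝ) M ×ˢ Set.Icc (0:ℝ) M)) with hD
  have hFD : ∀ n z, z ∈ K → ((St n z)⁻¹, ‖z‖^2, Bt n z, At n z) ∈ D := by
    intro n z hz
    have hx0 : (0:ℝ) ≤ ‖z‖^2 := by positivity
    have hx1 := hxlt z hz
    have hsb : Bt n z ≤ ∑' j : ℕ, (j:ℝ) * (‖z‖^2)^(j-1) :=
      Summable.sum_le_tsum _ (fun i _ => by positivity) (sumG1' hx0 hx1)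
    have hsa : At n z ≤ ∑' j : ℕ, (j:ℝ)^2 * (‖z‖^2)^(j-1) :=
      Summable.sum_le_tsum _ (fun i _ => by positivity) (sumG2' hx0 hx1)
    rw [tsumB' hx0 hx1] at hsb
    rw [tsumA' hx0 hx1] at hsa
    have hSpos : (0:ℝ) < St n z := lt_of_lt_of_le one_pos (hSt1 n z)
    rw [hD]
    simp only [Set.mem_prod, Set.mem_Icc]
    refine ⟨⟨inv_nonneg.mpr (le_of_lt hSpos), ?_⟩, ⟨hx0, le_of_lt hx1⟩,
      ⟨?_, hsb.trans (hdb z hz)⟩, ?_, hsa.trans (hda z hz)⟩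
    · rw [inv_le_one_iff₀]; right; exact hSt1 n z
    · exact Finset.sum_nonneg fun i _ => by positivity
    · exact Finset.sum_nonneg fun i _ => by positivity
  have hfD : ∀ z, z ∈ K →
      ((1 - ‖z‖^2 : ℝ), (‖z‖^2 : ℝ), 1 / (1 - ‖z‖^2)^2, (1 + ‖z‖^2) / (1 - ‖z‖^2)^3) ∈ D := by
    intro z hz
    have hx0 : (0:ℝ) ≤ ‖z‖^2 := by positivity
    have hx1 := hxlt z hz
    have hpos : (0:ℝ) < 1 - ‖z‖^2 := by linarith
    rw [hD]
    simp only [Set.mem_prod, Set.mem_Icc]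
    exact ⟨⟨by linarith, by linarith⟩, ⟨hx0, le_of_lt hx1⟩,
      ⟨by positivity, hdb z hz⟩, by positivity, hda z hz⟩
  -- the continuous assembly map
  set Φ : ℝ × ℝ × ℝ × ℝ → ℝ := fun p =>
    (1 / Real.pi) * (p.2.2.2 * p.1 - p.2.1 * p.2.2.1^2 * p.1^2 * (1 - ‖v‖^2 * p.1)) *
      Real.exp (-(‖v‖^2 * p.1)) with hΦdef
  have hΦc : Continuous Φ := by
    rw [hΦdef]; fun_prop
  have hDc : IsCompact D :=
    (isCompact_Icc.prod (isCompact_Icc.prod (isCompact_Icc.prod isCompact_Icc)))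
  have hΦ : UniformContinuousOn Φ D := hDc.uniformContinuousOn_of_continuous hΦc.continuousOn
  -- uniform convergence of the tuple
  have hFuc : TendstoUniformlyOn (fun n z => ((St n z)⁻¹, ‖z‖^2, Bt n z, At n z))
      (fun z => ((1 - ‖z‖^2 : ℝ), (‖z‖^2 : ℝ), 1 / (1 - ‖z‖^2)^2,
        (1 + ‖z‖^2) / (1 - ‖z‖^2)^3)) atTop K := by
    rw [Metric.tendstoUniformlyOn_iff] at hT hB hA ⊢
    intro ε hε
    filter_upwards [hT ε hε, hB ε hε, hA ε hε] with n h1 h2 h3 z hz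
    simp only [Prod.dist_eq]
    refine max_lt (h1 z hz) (max_lt ?_ (max_lt (h2 z hz) (h3 z hz)))
    rw [dist_self]; exact hε
  have heq : Set.EqOn
      (fun z => Φ ((1 - ‖z‖^2 : ℝ), (‖z‖^2 : ℝ), 1 / (1 - ‖z‖^2)^2,
        (1 + ‖z‖^2) / (1 - ‖z‖^2)^3))
      (fun z => (1 / Real.pi) *
          (1 / (1 - ‖z‖ ^ 2) ^ 2 + ‖v‖ ^ 2 * ‖z‖ ^ 2 / (1 - ‖z‖ ^ 2)) *
          Real.exp (-‖v‖ ^ 2 * (1 - ‖z‖ ^ 2))) K := by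
    intro z hz
    have hx1 := hxlt z hz
    have hpos : (0:ℝ) < 1 - ‖z‖^2 := by linarith
    have hnz : (1 - ‖z‖^2 : ℝ) ≠ 0 := ne_of_gt hpos
    simp only [hΦdef]
    generalize hxg : ‖z‖ ^ 2 = x at hnz ⊢
    rw [show -‖v‖ ^ 2 * (1 - x) = -(‖v‖^2 * (1 - x)) from by ring]
    congr 1
    field_simp
    ring
  have eS : ∀ (n : ℕ) (z : ℂ), (∑ j ∈ Finset.range (n+1), (‖z‖^2)^j) = St n z := fun _ _ => rfl
  have eB : ∀ (n : ℕ) (z : ℂ),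
      (∑ j ∈ Finset.range (n+1), (j:ℝ) * (‖z‖^2)^(j-1)) = Bt n z := fun _ _ => rfl
  have eA : ∀ (n : ℕ) (z : ℂ),
      (∑ j ∈ Finset.range (n+1), (j:ℝ)^2 * (‖z‖^2)^(j-1)) = At n z := fun _ _ => rfl
  have hrho : (fun n (z : ℂ) => rhoDens (fun j => Polynomial.X ^ j) n v z)
      = fun n z => Φ ((St n z)⁻¹, ‖z‖^2, Bt n z, At n z) := by
    funext n z
    simp only [rhoDens, hΦdef]
    rw [Kd_mono', K11_mono', normSq_K01_mono']
    simp only [eS, eB, eA, div_eq_mul_inv]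
    ring_nf
  rw [hrho]
  exact (uco_comp' hΦ hFuc hFD hfD).congr_right heq
end
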